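/- Let l ≥ 3 be an integer and let H be a 3-graph containing no 3-uniform loose cycle of length l, with average degree d = 3|E(H)|/|V(H)|. Then there exists an extender (X,Y) in H with |X| ≥ d/(24 l^2). -/

import Mathlib

open Finset

section Defs

variable {α : Type*} [DecidableEq α]

/-- `e 0, …, e (l-1)` form a loose cycle of length `l`: distinct edges, each of size
at least 2, cyclically consecutive edges meet in exactly one vertex, all other pairs
of edges are disjoint. -/
def IsLooseCycleOn (l : ℕ) (e : ℕ → Finset α) : Prop :=
  (∀ i < l, ∀ j < l, i ≠ j → e i ≠ e j) ∧
  (∀ i < l, 2 ≤ (e i).card) ∧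
  (∀ i < l, (e i ∩ e ((i + 1) % l)).card = 1) ∧
  (∀ i < l, ∀ j < l, j ≠ i → j ≠ (i + 1) % l → i ≠ (j + 1) % l → e i ∩ e j = ∅)

/-- A hypergraph with edge set `E` contains a loose cycle of length `l`. -/
def ContainsLooseCycle (l : ℕ) (E : Set (Finset α)) : Prop :=
  ∃ e : ℕ → Finset α, IsLooseCycleOn l e ∧ ∀ i < l, e i ∈ E

/-- A hypergraph with edge set `E` contains an `r`-uniform loose cycle of length `l`. -/
def ContainsUniformLooseCycle (r l : ℕ) (E : Set (Finset α)) : Prop :=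
  ∃ e : ℕ → Finset α, IsLooseCycleOn l e ∧ (∀ i < l, (e i).card = r) ∧ ∀ i < l, e i ∈ E

/-- `f 0, …, f (k-1)` form a simple path of length `k`: each edge has size at least 2,
consecutive edges meet, non-consecutive edges are disjoint, and any two distinct
edges meet in at most one vertex. -/
def IsSimplePathOn (k : ℕ) (f : ℕ → Finset α) : Prop :=
  (∀ i < k, 2 ≤ (f i).card) ∧
  (∀ i, i + 1 < k → (f i ∩ f (i + 1)).Nonempty) ∧
  (∀ i < k, ∀ j < k, i < j → j ≠ i + 1 → f i ∩ f j = ∅) ∧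
  (∀ i < k, ∀ j < k, i ≠ j → (f i ∩ f j).card ≤ 1)

/-- The simple path `f 0, …, f (k-1)` joins `a` to `b`. -/
def SimplePathJoins (k : ℕ) (f : ℕ → Finset α) (a b : α) : Prop :=
  IsSimplePathOn k f ∧ a ∈ f 0 ∧ b ∈ f (k - 1) ∧
  (2 ≤ k → a ∉ f 1 ∧ b ∉ f (k - 2))

/-- `p` is a heavy pair of the 3-graph `H` (with respect to the parameter `l`):
it is a pair of vertices contained in at least `2l-2` edges of `H`. -/
def PairHeavy (l : ℕ) (H : Finset (Finset α)) (p : Finset α) : Prop :=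
  p.card = 2 ∧ 2 * l - 2 ≤ (H.filter fun e => p ⊆ e).card

/-- `e` is a light edge of the 3-graph `H`: an edge of `H` containing no heavy pair. -/
def EdgeLight (l : ℕ) (H : Finset (Finset α)) (e : Finset α) : Prop :=
  e ∈ H ∧ ∀ p ⊆ e, ¬ PairHeavy l H p

/-- The reduced hypergraph `H*` of a 3-graph `H`: its edges are the light edges of `H`
together with the heavy pairs of `H`. -/
def Reduced (l : ℕ) (H : Finset (Finset α)) : Set (Finset α) :=
  {e | EdgeLight l H e ∨ PairHeavy l H e}

/-- `(X, Y)` is an extender in the 3-graph `H`. -/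
def IsExtender (l : ℕ) (H : Finset (Finset α)) (X Y : Finset α) : Prop :=
  Disjoint X Y ∧ Y.card ≤ 2 * X.card ∧
  ∀ u ∈ X, ∀ v ∈ X, u ≠ v → ∀ S : Finset α,
    Disjoint S ({u, v} ∪ Y) → S.card ≤ 2 * l - 5 →
      ∃ f : ℕ → Finset α, SimplePathJoins 2 f u v ∧ (∀ i < 2, f i ∈ H) ∧
        ∀ i < 2, Disjoint (f i) S

/-- `X` is an independent set of the hypergraph with edge set `E`. -/
def IndepIn (E : Set (Finset α)) (X : Finset α) : Prop := ∀ e ∈ E, ¬ e ⊆ X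

end Defs

namespace LCE
set_option linter.unusedSectionVars false

open scoped Classical

noncomputable section

variable {α : Type*} [DecidableEq α] [Fintype α]

/-- number of edges of `H` containing the set `p` -/
def codP (H : Finset (Finset α)) (p : Finset α) : ℕ := (H.filter fun e => p ⊆ e).card

section Sel
variable [LinearOrder α] [Inhabited α]

def sel (s : Finset α) : α := if h : s.Nonempty then s.min' h else default

theorem sel_mem {s : Finset α} (h : s.Nonempty) : sel s ∈ s := by
  rw [sel, dif_pos h]; exact s.min'_mem h

theorem sel_singleton (a : α) : sel ({a} : Finset α) = a := by
  have h : ({a} : Finset α).Nonempty := ⟨a, by simp⟩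
  have := sel_mem h; simpa using this

end Sel

variable {H : Finset (Finset α)}

theorem exists_third (h3 : ∀ e ∈ H, e.card = 3) {e : Finset α} (he : e ∈ H) {u t : α}
    (hu : u ∈ e) (ht : t ∈ e) (hut : u ≠ t) :
    ∃ w, w ≠ u ∧ w ≠ t ∧ e = {u, t, w} := by
  have hsub : ({u, t} : Finset α) ⊆ e := by
    intro x hx; simp only [mem_insert, mem_singleton] at hx
    rcases hx with rfl | rfl <;> assumption
  have hc2 : ({u, t} : Finset α).card = 2 := by
    rw [card_insert_of_notMem (by simp [hut]), card_singleton]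
  have hcd : (e \ {u, t}).card = 1 := by rw [card_sdiff_of_subset hsub, h3 e he, hc2]
  obtain ⟨w, hw⟩ := card_eq_one.mp hcd
  have hwmem : w ∈ e \ {u, t} := by rw [hw]; simp
  simp only [mem_sdiff, mem_insert, mem_singleton, not_or] at hwmem
  refine ⟨w, hwmem.2.1, hwmem.2.2, ?_⟩
  apply Finset.ext; intro x
  constructor
  · intro hx
    by_cases h1 : x = u; · simp [h1]
    by_cases h2 : x = t; · simp [h2]
    have hx' : x ∈ e \ {u, t} := by simp [hx, h1, h2]
    rw [hw] at hx'; simp only [mem_singleton] at hx'; simp [hx']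
  · intro hx; simp only [mem_insert, mem_singleton] at hx
    rcases hx with rfl | rfl | rfl
    · exact hu
    · exact ht
    · exact hwmem.1

section WithSel
variable [LinearOrder α] [Inhabited α]

theorem fresh (h3 : ∀ e ∈ H, e.card = 3) {u v : α} (huv : u ≠ v) {Z : Finset α}
    (hZ : Z.card < codP H {u, v}) :
    ∃ e ∈ H, ∃ w, w ≠ u ∧ w ≠ v ∧ w ∉ Z ∧ e = {u, v, w} := by
  by_contra hcon
  push_neg at hcon
  set T := H.filter (fun e => ({u, v} : Finset α) ⊆ e) with hT
  have hthird : ∀ e ∈ T, ∃ w, w ≠ u ∧ w ≠ v ∧ e = {u, v, w} := by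
    intro e he
    rw [hT, mem_filter] at he
    exact exists_third h3 he.1 (he.2 (by simp)) (he.2 (by simp)) huv
  have hsel : ∀ e ∈ T, sel (e \ {u, v}) ∈ Z ∧ e = {u, v, sel (e \ {u, v})} := by
    intro e he
    obtain ⟨w, hwu, hwv, hew⟩ := hthird e he
    have hdiff : e \ {u, v} = {w} := by
      rw [hew]; apply Finset.ext; intro x
      simp only [mem_sdiff, mem_insert, mem_singleton, not_or]
      constructor
      · rintro ⟨h1 | h1 | h1, h2, h3⟩ <;> first | exact h1 | exact absurd h1 h2 | exact absurd h1 h3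
      · rintro rfl; exact ⟨Or.inr (Or.inr rfl), hwu, hwv⟩
    rw [hdiff, sel_singleton]
    have heH : e ∈ H := (mem_filter.mp (hT ▸ he)).1
    refine ⟨?_, hew⟩
    by_contra hwZ
    exact hcon e heH w hwu hwv hwZ hew
  have hinj : T.card ≤ Z.card := by
    apply card_le_card_of_injOn (fun e => sel (e \ {u, v}))
    · intro e he; exact (hsel e he).1
    · intro e1 h1 e2 h2 heq
      have heq' : sel (e1 \ {u, v}) = sel (e2 \ {u, v}) := heq
      rw [(hsel e1 h1).2, (hsel e2 h2).2, heq']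
  rw [hT] at hinj
  rw [codP] at hZ
  omega

def two (E0 E1 : Finset α) : ℕ → Finset α := fun i => if i = 0 then E0 else E1

theorem two_zero (E0 E1 : Finset α) : two E0 E1 0 = E0 := if_pos rfl

theorem two_pos (E0 E1 : Finset α) {i : ℕ} (h : i ≠ 0) : two E0 E1 i = E1 := if_neg h

theorem twoPathOfEdges (h3 : ∀ e ∈ H, e.card = 3) {E0 E1 : Finset α} (h0 : E0 ∈ H) (h1 : E1 ∈ H)
    {u v z : α} (hu : u ∈ E0) (hv : v ∈ E1) (hu1 : u ∉ E1) (hv0 : v ∉ E0)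
    (hcap : E0 ∩ E1 = {z}) {S : Finset α} (hS0 : Disjoint E0 S) (hS1 : Disjoint E1 S) :
    ∃ f : ℕ → Finset α, SimplePathJoins 2 f u v ∧ (∀ i < 2, f i ∈ H) ∧
      ∀ i < 2, Disjoint (f i) S := by
  refine ⟨two E0 E1, ⟨⟨?_, ?_, ?_, ?_⟩, ?_, ?_, ?_⟩, ?_, ?_⟩
  · intro i hi
    by_cases h : i = 0
    · subst h; rw [two_zero, h3 _ h0]; omega
    · rw [two_pos _ _ h, h3 _ h1]; omega
  · intro i hi
    have hi0 : i = 0 := by omega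
    subst hi0
    rw [two_zero, two_pos _ _ (by omega : (0:ℕ) + 1 ≠ 0), hcap]
    exact ⟨z, by simp⟩
  · intro i hi j hj hij hne; omega
  · intro i hi j hj hij
    by_cases hj0 : j = 0
    · subst hj0
      have hi0 : i ≠ 0 := fun h => hij (h.trans rfl)
      rw [two_zero, two_pos _ _ hi0, inter_comm, hcap, card_singleton]
    · by_cases hi0 : i = 0
      · subst hi0
        rw [two_zero, two_pos _ _ hj0, hcap, card_singleton]
      · rw [two_pos _ _ hi0, two_pos _ _ hj0, inter_self]
        omega
  · rw [two_zero]; exact hu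
  · rw [two_pos _ _ (by omega : (2:ℕ) - 1 ≠ 0)]; exact hv
  · intro _
    constructor
    · rw [two_pos _ _ (by omega : (1:ℕ) ≠ 0)]; exact hu1
    · rw [(by omega : (2:ℕ) - 2 = 0), two_zero]; exact hv0
  · intro i hi
    by_cases h : i = 0
    · subst h; rw [two_zero]; exact h0
    · rw [two_pos _ _ h]; exact h1
  · intro i hi
    by_cases h : i = 0
    · subst h; rw [two_zero]; exact hS0
    · rw [two_pos _ _ h]; exact hS1


theorem codP_comm (H : Finset (Finset α)) (a b : α) : codP H {a, b} = codP H {b, a} := by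
  rw [Finset.pair_comm]

theorem twoPathOfCod {l : ℕ} (hl : 3 ≤ l) (h3 : ∀ e ∈ H, e.card = 3) {u v t : α}
    (hcu : 2 * l ≤ codP H {u, t}) (hcv : 2 * l ≤ codP H {v, t})
    (huv : u ≠ v) (hut : u ≠ t) (hvt : v ≠ t) {S : Finset α}
    (hS : S.card ≤ 2 * l - 5) (hSu : u ∉ S) (hSv : v ∉ S) (hSt : t ∉ S) :
    ∃ f : ℕ → Finset α, SimplePathJoins 2 f u v ∧ (∀ i < 2, f i ∈ H) ∧
      ∀ i < 2, Disjoint (f i) S := by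
  obtain ⟨E0, hE0, w, hwu, hwt, hwZ, hE0eq⟩ := fresh h3 hut (Z := insert v S) (by
    have h1 := card_insert_le v S; omega)
  simp only [mem_insert, not_or] at hwZ
  obtain ⟨E1, hE1, w', hw'v, hw't, hw'Z, hE1eq⟩ := fresh h3 hvt
    (Z := insert u (insert w S)) (by
      have h1 := card_insert_le u (insert w S)
      have h2 := card_insert_le w S
      omega)
  simp only [mem_insert, not_or] at hw'Z
  have hwv : w ≠ v := hwZ.1
  have hwS : w ∉ S := hwZ.2
  have hw'u : w' ≠ u := hw'Z.1
  have hw'w : w' ≠ w := hw'Z.2.1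
  have hw'S : w' ∉ S := hw'Z.2.2
  apply twoPathOfEdges h3 hE0 hE1 (z := t)
  · rw [hE0eq]; simp
  · rw [hE1eq]; simp
  · rw [hE1eq]; simp only [mem_insert, mem_singleton, not_or]
    exact ⟨huv, hut, fun h => hw'u h.symm⟩
  · rw [hE0eq]; simp only [mem_insert, mem_singleton, not_or]
    exact ⟨fun h => huv h.symm, hvt, fun h => hwv h.symm⟩
  · rw [hE0eq, hE1eq]
    apply Finset.ext; intro x
    simp only [mem_inter, mem_insert, mem_singleton]
    constructor
    · rintro ⟨h1 | h1 | h1, h2 | h2 | h2⟩ <;> subst h1 <;>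
        first
          | rfl
          | exact absurd h2 huv
          | exact absurd h2 hut
          | exact absurd h2.symm hw'u
          | exact absurd h2 hwv
          | exact absurd h2 hwt
          | exact absurd h2.symm hw'w
    · rintro rfl; exact ⟨Or.inr (Or.inl rfl), Or.inr (Or.inl rfl)⟩
  · rw [hE0eq, disjoint_left]
    intro a ha; simp only [mem_insert, mem_singleton] at ha
    rcases ha with rfl | rfl | rfl <;> assumption
  · rw [hE1eq, disjoint_left]
    intro a ha; simp only [mem_insert, mem_singleton] at ha
    rcases ha with rfl | rfl | rfl <;> assumption

/-- fat partners of a vertex -/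
def FatS (l : ℕ) (H : Finset (Finset α)) (v : α) : Finset α :=
  univ.filter fun x => x ≠ v ∧ 2 * l ≤ codP H {v, x}

theorem notMem_S {u u' : α} {S Y : Finset α}
    (hdisj : Disjoint S ({u, u'} ∪ Y)) :
    u ∉ S ∧ u' ∉ S ∧ ∀ y ∈ Y, y ∉ S := by
  have h := Finset.disjoint_left.mp hdisj
  refine ⟨fun hc => h hc (by simp), fun hc => h hc (by simp), fun y hy hc => h hc (by simp [hy])⟩

theorem extender_fat {l : ℕ} (hl : 3 ≤ l) (h3 : ∀ e ∈ H, e.card = 3) (v : α)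
    (hne : (FatS l H v).Nonempty) :
    IsExtender l H (FatS l H v) {v} := by
  refine ⟨?_, ?_, ?_⟩
  · rw [disjoint_right]
    intro a ha
    simp only [mem_singleton] at ha; subst ha
    simp only [FatS, mem_filter, mem_univ, true_and, not_and]
    intro h; exact absurd rfl h
  · have := card_pos.mpr hne
    simp only [card_singleton]; omega
  · intro u hu u' hu' huu' S hdisj hS
    simp only [FatS, mem_filter, mem_univ, true_and] at hu hu'
    obtain ⟨hSu, hSu', hSY⟩ := notMem_S hdisj
    have hSv : v ∉ S := hSY v (by simp)
    exact twoPathOfCod hl h3 (t := v)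
      (by rw [codP_comm]; exact hu.2) (by rw [codP_comm]; exact hu'.2)
      huu' hu.1 hu'.1 hS hSu hSu' hSv

theorem erase_card_two (h3 : ∀ e ∈ H, e.card = 3) {e : Finset α} (he : e ∈ H) {v : α}
    (hv : v ∈ e) : (e.erase v).card = 2 := by
  rw [card_erase_of_mem hv, h3 e he]

theorem extender_sunflower {l : ℕ} (hl : 3 ≤ l) (h3 : ∀ e ∈ H, e.card = 3) (v : α)
    {C : Finset (Finset α)}
    (hCH : ∀ e ∈ C, e ∈ H) (hCv : ∀ e ∈ C, v ∈ e)
    (hCp : ∀ e ∈ C, ∀ e' ∈ C, e ≠ e' → e ∩ e' = {v}) (hne : C.Nonempty) :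
    ∃ X Y : Finset α, IsExtender l H X Y ∧ X.card = C.card := by
  set A : Finset α → α := fun e => sel (e.erase v) with hA
  set B : Finset α → α := fun e => sel ((e.erase v).erase (A e)) with hB
  have hfacts : ∀ e ∈ C, A e ∈ e ∧ B e ∈ e ∧ A e ≠ v ∧ B e ≠ v ∧ A e ≠ B e ∧
      e = {v, A e, B e} := by
    intro e he
    have hc2 : (e.erase v).card = 2 := erase_card_two h3 (hCH e he) (hCv e he)
    have hAne : (e.erase v).Nonempty := by rw [← card_pos, hc2]; omega
    have hAmem : A e ∈ e.erase v := sel_mem hAne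
    have hc1 : ((e.erase v).erase (A e)).card = 1 := by
      rw [card_erase_of_mem hAmem, hc2]
    have hBne : ((e.erase v).erase (A e)).Nonempty := by rw [← card_pos, hc1]; omega
    have hBmem : B e ∈ (e.erase v).erase (A e) := sel_mem hBne
    have hBmem' : B e ∈ e.erase v := mem_of_mem_erase hBmem
    have hAB : A e ≠ B e := fun h => (ne_of_mem_erase hBmem) h.symm
    have hAv : A e ≠ v := ne_of_mem_erase hAmem
    have hBv : B e ≠ v := ne_of_mem_erase hBmem'
    have hsub : ({A e, B e} : Finset α) ⊆ e.erase v := by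
      intro x hx; simp only [mem_insert, mem_singleton] at hx
      rcases hx with rfl | rfl
      · exact hAmem
      · exact hBmem'
    have hcard2 : ({A e, B e} : Finset α).card = 2 := by
      rw [card_insert_of_notMem (by simp [hAB]), card_singleton]
    have heq : e.erase v = {A e, B e} :=
      (Finset.eq_of_subset_of_card_le hsub (by omega)).symm
    refine ⟨mem_of_mem_erase hAmem, mem_of_mem_erase hBmem', hAv, hBv, hAB, ?_⟩
    conv_lhs => rw [← insert_erase (hCv e he), heq]
  have hAinj : Set.InjOn A C := by
    intro e1 h1 e2 h2 heq
    by_contra hne12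
    have h12 : A e1 ∈ e1 ∩ e2 := by
      rw [mem_inter]
      exact ⟨(hfacts e1 h1).1, heq ▸ (hfacts e2 h2).1⟩
    rw [hCp e1 h1 e2 h2 hne12] at h12
    simp only [mem_singleton] at h12
    exact (hfacts e1 h1).2.2.1 h12
  refine ⟨C.image A, insert v (C.image B), ⟨?_, ?_, ?_⟩, card_image_of_injOn hAinj⟩
  · rw [disjoint_left]
    intro a ha hY
    simp only [mem_image] at ha
    obtain ⟨e, he, rfl⟩ := ha
    simp only [mem_insert, mem_image] at hY
    rcases hY with h | ⟨e', he', hBe'⟩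
    · exact (hfacts e he).2.2.1 h
    · by_cases h12 : e = e'
      · subst h12; exact (hfacts e he).2.2.2.2.1 hBe'.symm
      · have : A e ∈ e ∩ e' := by
          rw [mem_inter]
          exact ⟨(hfacts e he).1, hBe' ▸ (hfacts e' he').2.1⟩
        rw [hCp e he e' he' h12] at this
        simp only [mem_singleton] at this
        exact (hfacts e he).2.2.1 this
  · calc (insert v (C.image B)).card ≤ (C.image B).card + 1 := card_insert_le _ _
      _ ≤ C.card + 1 := by have := card_image_le (s := C) (f := B); omega
      _ ≤ 2 * C.card := by have := card_pos.mpr hne; omega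
      _ = 2 * (C.image A).card := by rw [card_image_of_injOn hAinj]
  · intro u hu u' hu' huu' S hdisj hS
    simp only [mem_image] at hu hu'
    obtain ⟨e, he, rfl⟩ := hu
    obtain ⟨e', he', rfl⟩ := hu'
    have hee' : e ≠ e' := fun h => huu' (by rw [h])
    obtain ⟨hSu, hSu', hSY⟩ := notMem_S hdisj
    have hcap := hCp e he e' he' hee'
    apply twoPathOfEdges h3 (hCH e he) (hCH e' he') (z := v) (hfacts e he).1
      (hfacts e' he').1
    · intro hmem
      have : A e ∈ e ∩ e' := mem_inter.mpr ⟨(hfacts e he).1, hmem⟩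
      rw [hcap] at this; simp only [mem_singleton] at this
      exact (hfacts e he).2.2.1 this
    · intro hmem
      have : A e' ∈ e ∩ e' := mem_inter.mpr ⟨hmem, (hfacts e' he').1⟩
      rw [hcap] at this; simp only [mem_singleton] at this
      exact (hfacts e' he').2.2.1 this
    · exact hcap
    · rw [disjoint_left]
      intro a ha
      have hae : a ∈ ({v, A e, B e} : Finset α) := by rw [← (hfacts e he).2.2.2.2.2]; exact ha
      simp only [mem_insert, mem_singleton] at hae
      rcases hae with rfl | rfl | rfl
      · exact hSY a (by simp)
      · exact hSu
      · exact hSY (B e) (by simp only [mem_insert, mem_image]; exact Or.inr ⟨e, he, rfl⟩)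
    · rw [disjoint_left]
      intro a ha
      have hae : a ∈ ({v, A e', B e'} : Finset α) := by
        rw [← (hfacts e' he').2.2.2.2.2]; exact ha
      simp only [mem_insert, mem_singleton] at hae
      rcases hae with rfl | rfl | rfl
      · exact hSY a (by simp)
      · exact hSu'
      · exact hSY (B e') (by simp only [mem_insert, mem_image]; exact Or.inr ⟨e', he', rfl⟩)


/-- vertices joined to `c` by an edge whose other pair is fat -/
def UsetS (l : ℕ) (H : Finset (Finset α)) (c : α) : Finset α :=
  univ.filter fun u => u ≠ c ∧ ∃ t, t ≠ u ∧ t ≠ c ∧ ({u, t, c} : Finset α) ∈ H ∧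
    2 * l ≤ codP H {u, t}

theorem exists_max_matching (l : ℕ) (H : Finset (Finset α)) (c : α) :
    ∃ M : Finset (Finset α),
      (∀ p ∈ M, p.card = 2 ∧ c ∉ p ∧ insert c p ∈ H ∧ 2 * l ≤ codP H p) ∧
      (∀ p ∈ M, ∀ q ∈ M, p ≠ q → p ∩ q = ∅) ∧
      (∀ u ∈ UsetS l H c, u ∉ M.biUnion id →
        ∃ t ∈ M.biUnion id, t ≠ u ∧ t ≠ c ∧ ({u, t, c} : Finset α) ∈ H ∧
          2 * l ≤ codP H {u, t}) := by
  classical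
  set 𝒜 : Finset (Finset (Finset α)) :=
    ((univ : Finset α).powersetCard 2).powerset.filter
      (fun M => (∀ p ∈ M, p.card = 2 ∧ c ∉ p ∧ insert c p ∈ H ∧ 2 * l ≤ codP H p) ∧
        (∀ p ∈ M, ∀ q ∈ M, p ≠ q → p ∩ q = ∅)) with h𝒜
  have hne : 𝒜.Nonempty := by
    refine ⟨∅, ?_⟩
    rw [h𝒜, mem_filter]
    refine ⟨by simp, by simp, by simp⟩
  obtain ⟨M, hM𝒜, hMmax⟩ := Finset.exists_max_image 𝒜 card hne
  rw [h𝒜, mem_filter] at hM𝒜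
  obtain ⟨hMsub, hMadm, hMdisj⟩ := hM𝒜
  refine ⟨M, hMadm, hMdisj, ?_⟩
  intro u hu huM
  rw [UsetS, mem_filter] at hu
  obtain ⟨-, huc, t0, ht0u, ht0c, ht0H, ht0cod⟩ := hu
  by_cases ht0M : t0 ∈ M.biUnion id
  · exact ⟨t0, ht0M, ht0u, ht0c, ht0H, ht0cod⟩
  · exfalso
    have hut0 : u ≠ t0 := fun h => ht0u h.symm
    have hpcard : ({u, t0} : Finset α).card = 2 := by
      rw [card_insert_of_notMem (by simp [hut0]), card_singleton]
    have hpnew : ({u, t0} : Finset α) ∉ M := by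
      intro h
      exact ht0M (mem_biUnion.mpr ⟨{u, t0}, h, by simp⟩)
    have hinsH : insert c ({u, t0} : Finset α) ∈ H := by
      have : insert c ({u, t0} : Finset α) = {u, t0, c} := by
        apply Finset.ext; intro x
        simp only [mem_insert, mem_singleton]
        tauto
      rw [this]; exact ht0H
    have hnotmem : ∀ x ∈ ({u, t0} : Finset α), x ∉ M.biUnion id := by
      intro x hx
      simp only [mem_insert, mem_singleton] at hx
      rcases hx with rfl | rfl
      · exact huM
      · exact ht0M
    have hM' : insert ({u, t0} : Finset α) M ∈ 𝒜 := by
      rw [h𝒜, mem_filter]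
      refine ⟨?_, ?_, ?_⟩
      · rw [mem_powerset]
        intro p hp
        rcases mem_insert.mp hp with rfl | hp
        · rw [mem_powersetCard]; exact ⟨subset_univ _, hpcard⟩
        · exact (mem_powerset.mp hMsub) hp
      · intro p hp
        rcases mem_insert.mp hp with rfl | hp
        · refine ⟨hpcard, ?_, hinsH, ht0cod⟩
          simp only [mem_insert, mem_singleton, not_or]
          exact ⟨fun h => huc h.symm, fun h => ht0c h.symm⟩
        · exact hMadm p hp
      · intro p hp q hq hpq
        rcases mem_insert.mp hp with rfl | hp <;> rcases mem_insert.mp hq with rfl | hq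
        · exact absurd rfl hpq
        · apply eq_empty_of_forall_notMem
          intro x hx
          rw [mem_inter] at hx
          exact hnotmem x hx.1 (mem_biUnion.mpr ⟨q, hq, hx.2⟩)
        · apply eq_empty_of_forall_notMem
          intro x hx
          rw [mem_inter] at hx
          exact hnotmem x hx.2 (mem_biUnion.mpr ⟨p, hp, hx.1⟩)
        · exact hMdisj p hp q hq hpq
    have hcard := hMmax _ hM'
    rw [card_insert_of_notMem hpnew] at hcard
    omega

theorem extender_matching_pairs {l : ℕ} (hl : 3 ≤ l) (h3 : ∀ e ∈ H, e.card = 3) (c : α)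
    {M : Finset (Finset α)}
    (hadm : ∀ p ∈ M, p.card = 2 ∧ c ∉ p ∧ insert c p ∈ H ∧ 2 * l ≤ codP H p)
    (hdisj : ∀ p ∈ M, ∀ q ∈ M, p ≠ q → p ∩ q = ∅) (hne : M.Nonempty) :
    ∃ X Y : Finset α, IsExtender l H X Y ∧ X.card = M.card := by
  have hinj : Set.InjOn (insert c) (M : Set (Finset α)) := by
    intro p hp q hq heq
    have hp' := (hadm p hp).2.1
    have hq' := (hadm q hq).2.1
    have : p = (insert c p).erase c := by rw [erase_insert hp']
    rw [this, heq, erase_insert hq']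
  obtain ⟨X, Y, hext, hcard⟩ := extender_sunflower hl h3 c
    (C := M.image (insert c))
    (by intro e he; obtain ⟨p, hp, rfl⟩ := mem_image.mp he; exact (hadm p hp).2.2.1)
    (by intro e he; obtain ⟨p, hp, rfl⟩ := mem_image.mp he; exact mem_insert_self c p)
    (by
      intro e he e' he' hee'
      obtain ⟨p, hp, rfl⟩ := mem_image.mp he
      obtain ⟨q, hq, rfl⟩ := mem_image.mp he'
      have hpq : p ≠ q := fun h => hee' (by rw [h])
      have h0 := hdisj p hp q hq hpq
      apply Finset.ext; intro x
      simp only [mem_inter, mem_insert, mem_singleton]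
      constructor
      · rintro ⟨h1 | h1, h2 | h2⟩
        · exact h1
        · exact h1
        · exact h2
        · exfalso
          have : x ∈ p ∩ q := mem_inter.mpr ⟨h1, h2⟩
          rw [h0] at this; exact notMem_empty x this
      · rintro rfl; exact ⟨Or.inl rfl, Or.inl rfl⟩)
    (hne.image _)
  refine ⟨X, Y, hext, ?_⟩
  rw [hcard, card_image_of_injOn hinj]

theorem extender_uset {l : ℕ} (hl : 3 ≤ l) (h3 : ∀ e ∈ H, e.card = 3) (c : α)
    {M : Finset (Finset α)}
    (hadm : ∀ p ∈ M, p.card = 2 ∧ c ∉ p ∧ insert c p ∈ H ∧ 2 * l ≤ codP H p)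
    (hcover : ∀ u ∈ UsetS l H c, u ∉ M.biUnion id →
      ∃ t ∈ M.biUnion id, t ≠ u ∧ t ≠ c ∧ ({u, t, c} : Finset α) ∈ H ∧
        2 * l ≤ codP H {u, t})
    (hX : M.card + 1 ≤ (UsetS l H c \ insert c (M.biUnion id)).card) :
    IsExtender l H (UsetS l H c \ insert c (M.biUnion id)) (insert c (M.biUnion id)) := by
  set X := UsetS l H c \ insert c (M.biUnion id) with hXdef
  set Y := insert c (M.biUnion id) with hYdef
  have hXmem : ∀ u ∈ X, u ∈ UsetS l H c ∧ u ≠ c ∧ u ∉ M.biUnion id := by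
    intro u hu
    rw [hXdef, mem_sdiff] at hu
    simp only [hYdef, mem_insert, not_or] at hu
    exact ⟨hu.1, hu.2.1, hu.2.2⟩
  refine ⟨sdiff_disjoint, ?_, ?_⟩
  · have h1 : Y.card ≤ 1 + (M.biUnion id).card := by
      rw [hYdef]; have := card_insert_le c (M.biUnion id); omega
    have h2 : (M.biUnion id).card ≤ 2 * M.card := by
      calc (M.biUnion id).card ≤ ∑ p ∈ M, (id p).card := card_biUnion_le
        _ = ∑ p ∈ M, 2 := by
            apply Finset.sum_congr rfl
            intro p hp; exact (hadm p hp).1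
        _ = 2 * M.card := by rw [Finset.sum_const, smul_eq_mul, mul_comm]
    omega
  · intro u hu u' hu' huu' S hdisjS hS
    obtain ⟨huU, huc, huM⟩ := hXmem u hu
    obtain ⟨huU', huc', huM'⟩ := hXmem u' hu'
    obtain ⟨t, htM, htu, htc, htH, htcod⟩ := hcover u huU huM
    obtain ⟨t', htM', htu', htc', htH', htcod'⟩ := hcover u' huU' huM'
    obtain ⟨hSu, hSu', hSY⟩ := notMem_S hdisjS
    have hSc : c ∉ S := hSY c (by rw [hYdef]; simp)
    have hSt : t ∉ S := hSY t (by rw [hYdef]; simp [htM])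
    have hSt' : t' ∉ S := hSY t' (by rw [hYdef]; simp [htM'])
    by_cases htt : t = t'
    · subst htt
      exact twoPathOfCod hl h3 htcod htcod' huu' (fun h => htu h.symm)
        (fun h => htu' h.symm) hS hSu hSu' hSt
    · apply twoPathOfEdges h3 htH htH' (z := c) (by simp) (by simp)
      · simp only [mem_insert, mem_singleton, not_or]
        refine ⟨huu', ?_, huc⟩
        intro h; rw [h] at huM; exact huM htM'
      · simp only [mem_insert, mem_singleton, not_or]
        refine ⟨fun h => huu' h.symm, ?_, huc'⟩
        intro h; rw [h] at huM'; exact huM' htM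
      · apply Finset.ext; intro x
        simp only [mem_inter, mem_insert, mem_singleton]
        constructor
        · rintro ⟨h1 | h1 | h1, h2 | h2 | h2⟩ <;> subst h1 <;>
            first
              | rfl
              | exact absurd h2 huu'
              | exact absurd h2 (by intro h; rw [h] at huM; exact huM htM')
              | exact absurd h2 huc
              | exact absurd h2.symm (by intro h; rw [h] at huM'; exact huM' htM)
              | exact absurd h2 htt
              | exact absurd h2 htc
              | exact absurd h2.symm huc'
              | exact absurd h2.symm htc'
        · rintro rfl; exact ⟨Or.inr (Or.inr rfl), Or.inr (Or.inr rfl)⟩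
      · rw [disjoint_left]
        intro a ha
        simp only [mem_insert, mem_singleton] at ha
        rcases ha with rfl | rfl | rfl
        · exact hSu
        · exact hSt
        · exact hSc
      · rw [disjoint_left]
        intro a ha
        simp only [mem_insert, mem_singleton] at ha
        rcases ha with rfl | rfl | rfl
        · exact hSu'
        · exact hSt'
        · exact hSc

theorem uset_bound {l : ℕ} (hl : 3 ≤ l) (h3 : ∀ e ∈ H, e.card = 3) {b : ℝ} (hb : 1 < b)
    (hno : ∀ X Y : Finset α, IsExtender l H X Y → (X.card : ℝ) < b) (c : α) :
    ((UsetS l H c).card : ℝ) < 3 * b + 1 := by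
  obtain ⟨M, hadm, hdisjM, hcover⟩ := exists_max_matching l H c
  have hm : (M.card : ℝ) < b := by
    rcases M.eq_empty_or_nonempty with rfl | hne
    · simpa using lt_trans one_pos hb
    · obtain ⟨X, Y, hext, hcard⟩ := extender_matching_pairs hl h3 c hadm hdisjM hne
      have := hno X Y hext
      rw [hcard] at this; exact this
  have hYcard : ((insert c (M.biUnion id)).card : ℝ) ≤ 1 + 2 * M.card := by
    have h1 := card_insert_le c (M.biUnion id)
    have h2 : (M.biUnion id).card ≤ 2 * M.card := by
      calc (M.biUnion id).card ≤ ∑ p ∈ M, (id p).card := card_biUnion_le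
        _ = ∑ p ∈ M, 2 := by
            apply Finset.sum_congr rfl
            intro p hp; exact (hadm p hp).1
        _ = 2 * M.card := by rw [Finset.sum_const, smul_eq_mul, mul_comm]
    have h3' : (insert c (M.biUnion id)).card ≤ 1 + 2 * M.card := by omega
    exact_mod_cast h3'
  have hsub : UsetS l H c ⊆ (UsetS l H c \ insert c (M.biUnion id)) ∪
      insert c (M.biUnion id) := by
    intro x hx
    rw [mem_union, mem_sdiff]
    by_cases h : x ∈ insert c (M.biUnion id)
    · exact Or.inr h
    · exact Or.inl ⟨hx, h⟩
  have hUcard : ((UsetS l H c).card : ℝ) ≤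
      ((UsetS l H c \ insert c (M.biUnion id)).card : ℝ) +
      ((insert c (M.biUnion id)).card : ℝ) := by
    have := le_trans (card_le_card hsub) (card_union_le _ _)
    exact_mod_cast this
  by_cases hX : M.card + 1 ≤ (UsetS l H c \ insert c (M.biUnion id)).card
  · have hext := extender_uset hl h3 c hadm hcover hX
    have hxb := hno _ _ hext
    calc ((UsetS l H c).card : ℝ) ≤ _ + _ := hUcard
      _ < b + (1 + 2 * M.card) := by
          apply add_lt_add_of_lt_of_le hxb hYcard
      _ ≤ b + (1 + 2 * b) := by nlinarith
      _ = 3 * b + 1 := by ring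
  · push_neg at hX
    have hXle : ((UsetS l H c \ insert c (M.biUnion id)).card : ℝ) ≤ (M.card : ℝ) := by
      exact_mod_cast Nat.lt_succ_iff.mp hX
    calc ((UsetS l H c).card : ℝ) ≤ _ + _ := hUcard
      _ ≤ (M.card : ℝ) + (1 + 2 * M.card) := add_le_add hXle hYcard
      _ < b + (1 + 2 * b) := by nlinarith
      _ = 3 * b + 1 := by ring


def degS (H : Finset (Finset α)) (v : α) : ℕ := (H.filter fun e => v ∈ e).card

theorem codP_eq_filter_mem (H : Finset (Finset α)) (v x : α) :
    codP H {v, x} = (H.filter fun e => v ∈ e ∧ x ∈ e).card := by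
  rw [codP]
  congr 1
  apply filter_congr
  intro e _
  simp [insert_subset_iff]

theorem exists_sunflower_cover (h3 : ∀ e ∈ H, e.card = 3) (v : α) :
    ∃ C : Finset (Finset α), (∀ e ∈ C, e ∈ H ∧ v ∈ e) ∧
      (∀ e ∈ C, ∀ e' ∈ C, e ≠ e' → e ∩ e' = {v}) ∧
      (∀ f ∈ H, v ∈ f → ∃ e ∈ C, ∃ x, x ≠ v ∧ x ∈ e ∧ x ∈ f) := by
  classical
  set 𝒞 : Finset (Finset (Finset α)) :=
    H.powerset.filter (fun C => (∀ e ∈ C, v ∈ e) ∧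
      (∀ e ∈ C, ∀ e' ∈ C, e ≠ e' → e ∩ e' = {v})) with h𝒞
  have hne : 𝒞.Nonempty := ⟨∅, by rw [h𝒞, mem_filter]; refine ⟨by simp, by simp, by simp⟩⟩
  obtain ⟨C, hC𝒞, hCmax⟩ := Finset.exists_max_image 𝒞 card hne
  rw [h𝒞, mem_filter, mem_powerset] at hC𝒞
  obtain ⟨hCH, hCv, hCp⟩ := hC𝒞
  refine ⟨C, fun e he => ⟨hCH he, hCv e he⟩, hCp, ?_⟩
  intro f hf hvf
  by_cases hfC : f ∈ C
  · have hcd : (f.erase v).Nonempty := by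
      rw [← card_pos, erase_card_two h3 hf hvf]; omega
    obtain ⟨x, hx⟩ := hcd
    exact ⟨f, hfC, x, ne_of_mem_erase hx, mem_of_mem_erase hx, mem_of_mem_erase hx⟩
  · by_contra hcon
    push_neg at hcon
    have hins : insert f C ∈ 𝒞 := by
      rw [h𝒞, mem_filter, mem_powerset]
      refine ⟨insert_subset hf hCH, ?_, ?_⟩
      · intro e he
        rcases mem_insert.mp he with rfl | he
        · exact hvf
        · exact hCv e he
      · intro e he e' he' hee'
        have key : ∀ g ∈ C, f ∩ g = {v} := by
          intro g hg
          apply Finset.ext; intro x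
          simp only [mem_inter, mem_singleton]
          constructor
          · rintro ⟨hx1, hx2⟩
            by_contra hxv
            exact hcon g hg x hxv hx2 hx1
          · rintro rfl; exact ⟨hvf, hCv g hg⟩
        rcases mem_insert.mp he with he1 | he1
        · rcases mem_insert.mp he' with he2 | he2
          · exact absurd (he1.trans he2.symm) hee'
          · rw [he1]; exact key e' he2
        · rcases mem_insert.mp he' with he2 | he2
          · rw [he2, inter_comm]; exact key e he1
          · exact hCp e he1 e' he2 hee'
    have := hCmax _ hins
    rw [card_insert_of_notMem hfC] at this
    omega

theorem deg_bound {l : ℕ} (hl : 3 ≤ l) (h3 : ∀ e ∈ H, e.card = 3) {b : ℝ} (hb : 1 < b)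
    (hno : ∀ X Y : Finset α, IsExtender l H X Y → (X.card : ℝ) < b) (v : α) :
    ((degS H v : ℕ) : ℝ) ≤ (∑ x ∈ FatS l H v, (codP H {v, x} : ℝ)) + (2 * l) * (2 * b) := by
  obtain ⟨C, hCm, hCp, hcov⟩ := exists_sunflower_cover h3 v
  have hCb : ((C.card : ℕ) : ℝ) < b := by
    rcases C.eq_empty_or_nonempty with rfl | hCne
    · simpa using lt_trans one_pos hb
    · obtain ⟨X, Y, hext, hcard⟩ := extender_sunflower hl h3 v
        (fun e he => (hCm e he).1) (fun e he => (hCm e he).2) hCp hCne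
      have := hno X Y hext
      rw [hcard] at this; exact this
  set petals : Finset α := C.biUnion (fun e => e.erase v) with hpet
  have hpetcard : petals.card ≤ 2 * C.card := by
    calc petals.card ≤ ∑ e ∈ C, (e.erase v).card := card_biUnion_le
      _ = ∑ e ∈ C, 2 := by
          apply Finset.sum_congr rfl
          intro e he; exact erase_card_two h3 (hCm e he).1 (hCm e he).2
      _ = 2 * C.card := by rw [Finset.sum_const, smul_eq_mul, mul_comm]
  have hdeg : degS H v ≤ ∑ x ∈ petals, codP H {v, x} := by
    rw [degS]
    calc (H.filter fun e => v ∈ e).card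
        ≤ (petals.biUnion (fun x => H.filter fun e => v ∈ e ∧ x ∈ e)).card := by
          apply card_le_card
          intro f hf
          rw [mem_filter] at hf
          obtain ⟨e, heC, x, hxv, hxe, hxf⟩ := hcov f hf.1 hf.2
          rw [mem_biUnion]
          refine ⟨x, ?_, ?_⟩
          · rw [hpet, mem_biUnion]
            exact ⟨e, heC, mem_erase.mpr ⟨hxv, hxe⟩⟩
          · rw [mem_filter]; exact ⟨hf.1, hf.2, hxf⟩
      _ ≤ ∑ x ∈ petals, (H.filter fun e => v ∈ e ∧ x ∈ e).card := card_biUnion_le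
      _ = ∑ x ∈ petals, codP H {v, x} := by
          apply Finset.sum_congr rfl
          intro x _
          rw [codP_eq_filter_mem]
  have hsplit : ∑ x ∈ petals, codP H {v, x} ≤
      (∑ x ∈ FatS l H v, codP H {v, x}) + petals.card * (2 * l - 1) := by
    rw [← Finset.sum_inter_add_sum_sdiff petals (FatS l H v) (fun x => codP H {v, x})]
    have h1 : ∑ x ∈ petals ∩ FatS l H v, codP H {v, x} ≤
        ∑ x ∈ FatS l H v, codP H {v, x} :=
      Finset.sum_le_sum_of_subset inter_subset_right
    have h2 : ∑ x ∈ petals \ FatS l H v, codP H {v, x} ≤ petals.card * (2 * l - 1) := by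
      calc ∑ x ∈ petals \ FatS l H v, codP H {v, x} ≤
          ∑ _x ∈ petals \ FatS l H v, (2 * l - 1) := by
            apply Finset.sum_le_sum
            intro x hx
            rw [mem_sdiff] at hx
            have hxv : x ≠ v := by
              obtain ⟨e, heC, hxe⟩ := mem_biUnion.mp (hpet ▸ hx.1)
              exact ne_of_mem_erase hxe
            have : ¬ (2 * l ≤ codP H {v, x}) := by
              intro hcod
              exact hx.2 (by rw [FatS, mem_filter]; exact ⟨mem_univ x, hxv, hcod⟩)
            omega
        _ = (petals \ FatS l H v).card * (2 * l - 1) := by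
            rw [Finset.sum_const, smul_eq_mul]
        _ ≤ petals.card * (2 * l - 1) := by
            apply Nat.mul_le_mul_right
            exact card_le_card sdiff_subset
    omega
  have hnat : degS H v ≤ (∑ x ∈ FatS l H v, codP H {v, x}) + (2 * C.card) * (2 * l - 1) := by
    have := Nat.mul_le_mul_right (2 * l - 1) hpetcard
    omega
  have hcast : ((degS H v : ℕ) : ℝ) ≤
      (∑ x ∈ FatS l H v, (codP H {v, x} : ℝ)) + ((2 * C.card) * (2 * l - 1) : ℕ) := by
    push_cast
    exact_mod_cast hnat
  apply le_trans hcast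
  apply add_le_add_right
  have h1 : (((2 * C.card) * (2 * l - 1) : ℕ) : ℝ) ≤ (2 * (C.card : ℝ)) * (2 * l) := by
    push_cast
    have hl1 : (1:ℝ) ≤ 2 * l := by
      have : (3:ℝ) ≤ l := by exact_mod_cast hl
      nlinarith
    have : ((2 * l - 1 : ℕ) : ℝ) ≤ 2 * (l:ℝ) := by
      push_cast [Nat.cast_sub (by omega : 1 ≤ 2 * l)]
      linarith
    nlinarith [Nat.cast_nonneg (α := ℝ) C.card]
  apply le_trans h1
  have hcb : (C.card : ℝ) < b := hCb
  nlinarith [Nat.cast_nonneg (α := ℝ) l]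


/-- fat pairs of `H` -/
def FatPairs (l : ℕ) (H : Finset (Finset α)) : Finset (Finset α) :=
  ((univ : Finset α).powersetCard 2).filter (fun p => 2 * l ≤ codP H p)

/-- triangles of the pair-graph `Q` -/
def triOf (Q : Finset (Finset α)) : Finset (Finset α) :=
  ((univ : Finset α).powersetCard 3).filter (fun t => ∀ p ∈ t.powersetCard 2, p ∈ Q)

theorem apex_lemma {Q : Finset (Finset α)} {q : Finset α} (hq2 : q.card = 2)
    {K : Finset α} (hK : K.card < ((triOf Q).filter (q ⊆ ·)).card) :
    ∃ w, w ∉ K ∧ w ∉ q ∧ ∀ x ∈ q, ({x, w} : Finset α) ∈ Q := by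
  by_contra hcon
  push_neg at hcon
  set T := (triOf Q).filter (q ⊆ ·) with hT
  have hthird : ∀ t ∈ T, ∃ w, w ∉ q ∧ t = insert w q ∧ ∀ x ∈ q, ({x, w} : Finset α) ∈ Q := by
    intro t ht
    rw [hT, mem_filter, triOf, mem_filter, mem_powersetCard] at ht
    obtain ⟨⟨⟨-, ht3⟩, htp⟩, hqt⟩ := ht
    have hcd : (t \ q).card = 1 := by rw [card_sdiff_of_subset hqt, ht3, hq2]
    obtain ⟨w, hw⟩ := card_eq_one.mp hcd
    have hwmem : w ∈ t \ q := by rw [hw]; simp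
    rw [mem_sdiff] at hwmem
    refine ⟨w, hwmem.2, ?_, ?_⟩
    · apply Finset.ext; intro x
      rw [mem_insert]
      constructor
      · intro hx
        by_cases hxq : x ∈ q
        · exact Or.inr hxq
        · left
          have : x ∈ t \ q := mem_sdiff.mpr ⟨hx, hxq⟩
          rw [hw] at this; simpa using this
      · rintro (rfl | hx)
        · exact hwmem.1
        · exact hqt hx
    · intro x hx
      apply htp
      rw [mem_powersetCard]
      constructor
      · intro y hy
        simp only [mem_insert, mem_singleton] at hy
        rcases hy with rfl | rfl
        · exact hqt hx
        · exact hwmem.1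
      · rw [card_insert_of_notMem (by
          simp only [mem_singleton]
          intro h; exact hwmem.2 (h ▸ hx)), card_singleton]
  have hinK : ∀ t ∈ T, sel (t \ q) ∈ K ∧ t = insert (sel (t \ q)) q := by
    intro t ht
    obtain ⟨w, hwq, hteq, hpairs⟩ := hthird t ht
    have hdiff : t \ q = {w} := by
      rw [hteq]
      apply Finset.ext; intro x
      rw [mem_sdiff, mem_insert, mem_singleton]
      constructor
      · rintro ⟨rfl | hx, hxq⟩
        · rfl
        · exact absurd hx hxq
      · rintro rfl; exact ⟨Or.inl rfl, hwq⟩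
    rw [hdiff, sel_singleton]
    refine ⟨?_, hteq⟩
    by_contra hwK
    obtain ⟨x, hx, hxw⟩ := hcon w hwK hwq
    exact hxw (hpairs x hx)
  have : T.card ≤ K.card := by
    apply card_le_card_of_injOn (fun t => sel (t \ q))
    · intro t ht; exact (hinK t ht).1
    · intro t1 h1 t2 h2 heq
      have heq' : sel (t1 \ q) = sel (t2 \ q) := heq
      rw [(hinK t1 h1).2, (hinK t2 h2).2, heq']
  omega

def three (x y w : α) : ℕ → α := fun i => if i = 0 then x else if i = 1 then y else w

theorem cycles_of_rich {l : ℕ} (hl : 3 ≤ l) {Q : Finset (Finset α)}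
    (hQ2 : ∀ q ∈ Q, q.card = 2)
    (hrich : ∀ q ∈ Q, 2 * l - 2 ≤ ((triOf Q).filter (q ⊆ ·)).card)
    (hne : Q.Nonempty) :
    ∀ m, 3 ≤ m → m ≤ 2 * l - 1 →
      ∃ g : ℕ → α, (∀ i < m, ∀ j < m, i ≠ j → g i ≠ g j) ∧
        (∀ i < m, ({g i, g ((i + 1) % m)} : Finset α) ∈ Q) := by
  intro m hm3
  induction m, hm3 using Nat.le_induction with
  | base =>
    intro _
    obtain ⟨q, hq⟩ := hne
    obtain ⟨x, y, hxy, hqeq⟩ := Finset.card_eq_two.mp (hQ2 q hq)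
    subst hqeq
    obtain ⟨w, -, hwq, hpairs⟩ := apex_lemma (Q := Q) (hQ2 _ hq) (K := (∅ : Finset α)) (by
      have h1 := hrich _ hq
      have h0 : (∅ : Finset α).card = 0 := card_empty
      omega)
    simp only [mem_insert, mem_singleton, not_or] at hwq
    set g : ℕ → α := three x y w with hgdef
    have hv0 : g 0 = x := rfl
    have hv1 : g 1 = y := rfl
    have hv2 : g 2 = w := rfl
    refine ⟨g, ?_, ?_⟩
    · intro i hi j hj hij
      have hca : i = 0 ∨ i = 1 ∨ i = 2 := by omega
      have hcb : j = 0 ∨ j = 1 ∨ j = 2 := by omega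
      rcases hca with rfl | rfl | rfl <;> rcases hcb with rfl | rfl | rfl
      · exact absurd rfl hij
      · rw [hv0, hv1]; exact hxy
      · rw [hv0, hv2]; exact fun h => hwq.1 h.symm
      · rw [hv1, hv0]; exact hxy.symm
      · exact absurd rfl hij
      · rw [hv1, hv2]; exact fun h => hwq.2 h.symm
      · rw [hv2, hv0]; exact hwq.1
      · rw [hv2, hv1]; exact hwq.2
      · exact absurd rfl hij
    · intro i hi
      have hca : i = 0 ∨ i = 1 ∨ i = 2 := by omega
      rcases hca with rfl | rfl | rfl
      · have : (0 + 1) % 3 = 1 := by norm_num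
        rw [this, hv0, hv1]; exact hq
      · have : (1 + 1) % 3 = 2 := by norm_num
        rw [this, hv1, hv2]
        exact hpairs y (by simp)
      · have : (2 + 1) % 3 = 0 := by norm_num
        rw [this, hv2, hv0]
        have := hpairs x (by simp)
        rwa [Finset.pair_comm] at this
  | succ m hm3 ih =>
    intro hmle
    obtain ⟨g, hginj, hgQ⟩ := ih (by omega)
    have hq : ({g 0, g 1} : Finset α) ∈ Q := by
      have := hgQ 0 (by omega)
      rwa [Nat.mod_eq_of_lt (by omega : 1 < m)] at this
    have himgcard : ((range m).image g).card = m := by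
      rw [Finset.card_image_of_injOn, card_range]
      intro i hi j hj hij
      by_contra hne'
      exact hginj i (mem_range.mp hi) j (mem_range.mp hj) hne' hij
    have hqsub : ({g 0, g 1} : Finset α) ⊆ (range m).image g := by
      intro x hx
      simp only [mem_insert, mem_singleton] at hx
      rcases hx with rfl | rfl
      · exact mem_image.mpr ⟨0, mem_range.mpr (by omega), rfl⟩
      · exact mem_image.mpr ⟨1, mem_range.mpr (by omega), rfl⟩
    obtain ⟨w, hwK, hwq, hpairs⟩ := apex_lemma (Q := Q) (hQ2 _ hq)
      (K := ((range m).image g) \ ({g 0, g 1} : Finset α)) (by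
        have hr := hrich _ hq
        have h01 : g 0 ≠ g 1 := hginj 0 (by omega) 1 (by omega) (by omega)
        have hc2 : ({g 0, g 1} : Finset α).card = 2 := by
          rw [card_insert_of_notMem (by simp [h01]), card_singleton]
        rw [card_sdiff_of_subset hqsub, himgcard, hc2]
        omega)
    have hwimg : w ∉ (range m).image g := by
      intro hw
      exact hwK (mem_sdiff.mpr ⟨hw, hwq⟩)
    have hwg : ∀ i < m, w ≠ g i := by
      intro i hi h
      exact hwimg (mem_image.mpr ⟨i, mem_range.mpr hi, h.symm⟩)
    set g' : ℕ → α := fun i => if i = 0 then g 0 else if i = 1 then w else g (i - 1)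
      with hg'def
    have hv0 : g' 0 = g 0 := rfl
    have hv1 : g' 1 = w := rfl
    have hv2 : ∀ i, 2 ≤ i → g' i = g (i - 1) := by
      intro i hi
      show (if i = 0 then g 0 else if i = 1 then w else g (i - 1)) = g (i - 1)
      rw [if_neg (by omega), if_neg (by omega)]
    refine ⟨g', ?_, ?_⟩
    · intro i hi j hj hij
      by_cases hi0 : i = 0
      · subst hi0
        by_cases hj1 : j = 1
        · subst hj1; rw [hv0, hv1]
          exact fun h => hwg 0 (by omega) h.symm
        · rw [hv0, hv2 j (by omega)]
          exact hginj 0 (by omega) (j - 1) (by omega) (by omega)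
      · by_cases hi1 : i = 1
        · subst hi1
          by_cases hj0 : j = 0
          · subst hj0; rw [hv1, hv0]
            exact hwg 0 (by omega)
          · rw [hv1, hv2 j (by omega)]
            exact hwg (j - 1) (by omega)
        · rw [hv2 i (by omega)]
          by_cases hj0 : j = 0
          · subst hj0; rw [hv0]
            exact hginj (i - 1) (by omega) 0 (by omega) (by omega)
          · by_cases hj1 : j = 1
            · subst hj1; rw [hv1]
              exact fun h => hwg (i - 1) (by omega) h.symm
            · rw [hv2 j (by omega)]
              exact hginj (i - 1) (by omega) (j - 1) (by omega) (by omega)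
    · intro i hi
      by_cases hi0 : i = 0
      · subst hi0
        rw [Nat.mod_eq_of_lt (by omega : 0 + 1 < m + 1), hv0, hv1]
        exact hpairs (g 0) (by simp)
      · by_cases hi1 : i = 1
        · subst hi1
          rw [Nat.mod_eq_of_lt (by omega : 1 + 1 < m + 1), hv1, hv2 2 (by omega)]
          have := hpairs (g 1) (by simp)
          rwa [Finset.pair_comm] at this
        · by_cases him : i = m
          · rw [him, Nat.mod_self, hv0, hv2 m (by omega)]
            have h1 := hgQ (m - 1) (by omega)
            have hmod : (m - 1 + 1) % m = 0 := by
              rw [(by omega : m - 1 + 1 = m), Nat.mod_self]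
            rwa [hmod] at h1
          · rw [Nat.mod_eq_of_lt (by omega : i + 1 < m + 1), hv2 i (by omega),
              hv2 (i + 1) (by omega)]
            have h1 := hgQ (i - 1) (by omega)
            have hmod : (i - 1 + 1) % m = i := by
              rw [(by omega : i - 1 + 1 = i), Nat.mod_eq_of_lt (by omega)]
            rw [hmod] at h1
            rw [(by omega : i + 1 - 1 = i)]
            exact h1


theorem mod_succ_cases {l i : ℕ} (hi : i < l) :
    (i + 1) % l = i + 1 ∨ ((i + 1) % l = 0 ∧ i + 1 = l) := by
  rcases Nat.lt_or_ge (i + 1) l with h | h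
  · exact Or.inl (Nat.mod_eq_of_lt h)
  · right
    have h' : i + 1 = l := by omega
    exact ⟨by rw [h', Nat.mod_self], h'⟩

theorem succ_mod_lt {l : ℕ} (i : ℕ) (hl : 0 < l) : (i + 1) % l < l := Nat.mod_lt _ hl

theorem succ_mod_ne {l i : ℕ} (hl : 2 ≤ l) (hi : i < l) : (i + 1) % l ≠ i := by
  rcases mod_succ_cases hi with h | ⟨h0, hl'⟩ <;> omega

theorem succ_mod_inj {l i j : ℕ} (hi : i < l) (hj : j < l)
    (h : (i + 1) % l = (j + 1) % l) : i = j := by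
  rcases mod_succ_cases hi with h1 | ⟨h1, h1'⟩ <;>
    rcases mod_succ_cases hj with h2 | ⟨h2, h2'⟩ <;> omega

theorem succ_succ_mod_ne {l i : ℕ} (hl : 3 ≤ l) (hi : i < l) :
    ((i + 1) % l + 1) % l ≠ i := by
  rcases mod_succ_cases hi with h | ⟨h, hil⟩
  · rw [h]
    have hlt : i + 1 < l := by
      have := succ_mod_lt i (l := l) (by omega)
      omega
    rcases mod_succ_cases hlt with h' | ⟨h', h''⟩ <;> omega
  · rw [h]
    have h1 : (0 + 1) % l = 1 := by
      rw [Nat.mod_eq_of_lt (by omega)]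
    omega

theorem expand_aux {l : ℕ} (hl : 3 ≤ l) (h3 : ∀ e ∈ H, e.card = 3) {g : ℕ → α}
    (hginj : ∀ i < l, ∀ j < l, i ≠ j → g i ≠ g j)
    (hgQ : ∀ i < l, 2 * l ≤ codP H {g i, g ((i + 1) % l)}) :
    ∀ k ≤ l, ∃ ed : ℕ → Finset α, ∀ i < k, ed i ∈ H ∧
      ∃ w, ed i = {g i, g ((i + 1) % l), w} ∧ w ∉ (range l).image g ∧
        ∀ j < k, j ≠ i → w ∉ ed j := by
  intro k
  induction k with
  | zero => exact fun _ => ⟨fun _ => ∅, by omega⟩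
  | succ k ih =>
    intro hk1
    obtain ⟨ed, hed⟩ := ih (by omega)
    have hgmem : ∀ i < l, g i ∈ (range l).image g := fun i hi =>
      mem_image.mpr ⟨i, mem_range.mpr hi, rfl⟩
    have hk1l : (k + 1) % l < l := succ_mod_lt k (by omega)
    have hkl : k < l := by omega
    have hkne : g k ≠ g ((k + 1) % l) :=
      hginj k hkl _ hk1l (Ne.symm (succ_mod_ne (by omega) hkl))
    have hprsub : ({g k, g ((k + 1) % l)} : Finset α) ⊆ (range l).image g := by
      intro x hx
      simp only [mem_insert, mem_singleton] at hx
      rcases hx with rfl | rfl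
      · exact hgmem k hkl
      · exact hgmem _ hk1l
    have hZsub : ({g k, g ((k + 1) % l)} : Finset α) ⊆
        ((range l).image g ∪ (range k).biUnion ed) := fun x hx =>
      mem_union_left _ (hprsub hx)
    have hdiffcard : (((range k).biUnion ed) \ ((range l).image g)).card ≤ k := by
      have hsub : ((range k).biUnion ed) \ ((range l).image g) ⊆
          (range k).biUnion (fun j => ed j \ (range l).image g) := by
        intro x hx
        rw [mem_sdiff, mem_biUnion] at hx
        obtain ⟨⟨j, hj, hxj⟩, hxg⟩ := hx
        exact mem_biUnion.mpr ⟨j, hj, mem_sdiff.mpr ⟨hxj, hxg⟩⟩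
      calc (((range k).biUnion ed) \ ((range l).image g)).card
          ≤ ∑ j ∈ range k, (ed j \ (range l).image g).card :=
            le_trans (card_le_card hsub) card_biUnion_le
        _ ≤ ∑ _j ∈ range k, 1 := by
            apply Finset.sum_le_sum
            intro j hj
            have hjk : j < k := mem_range.mp hj
            obtain ⟨-, wj, hedj, hwjg, -⟩ := hed j hjk
            have : ed j \ (range l).image g ⊆ {wj} := by
              intro x hx
              rw [mem_sdiff, hedj] at hx
              simp only [mem_insert, mem_singleton] at hx ⊢
              rcases hx.1 with rfl | rfl | rfl
              · exact absurd (hgmem j (by omega)) hx.2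
              · exact absurd (hgmem _ (succ_mod_lt j (by omega))) hx.2
              · rfl
            calc (ed j \ (range l).image g).card ≤ ({wj} : Finset α).card :=
                card_le_card this
              _ = 1 := card_singleton _
        _ = k := by rw [Finset.sum_const, card_range, smul_eq_mul, mul_one]
    have hZcard : ((((range l).image g ∪ (range k).biUnion ed) \ ({g k, g ((k + 1) % l)} : Finset α)).card) < 2 * l := by
      have h1 : (((range l).image g ∪ (range k).biUnion ed)).card ≤ l + k := by
        have he : (range l).image g ∪ (range k).biUnion ed =
            (range l).image g ∪ (((range k).biUnion ed) \ ((range l).image g)) := by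
          rw [union_sdiff_self_eq_union]
        rw [he]
        calc ((range l).image g ∪ (((range k).biUnion ed) \ ((range l).image g))).card
            ≤ ((range l).image g).card +
              ((((range k).biUnion ed) \ ((range l).image g))).card := card_union_le _ _
          _ ≤ l + k := by
              have := card_image_le (s := range l) (f := g)
              rw [card_range] at this
              omega
      have h2 := card_le_card hZsub
      have h3' : (((range l).image g ∪ (range k).biUnion ed) \ ({g k, g ((k + 1) % l)} : Finset α)).card =
          (((range l).image g ∪ (range k).biUnion ed)).card - 2 := by
        rw [card_sdiff_of_subset hZsub, card_insert_of_notMem (by simp [hkne]), card_singleton]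
      omega
    obtain ⟨e, heH, w, hwk, hwk1, hwZ, heq⟩ := fresh h3 hkne
      (Z := (((range l).image g ∪ (range k).biUnion ed) \ ({g k, g ((k + 1) % l)} : Finset α))) (by
        have := hgQ k hkl
        omega)
    have hwpr : w ∉ ({g k, g ((k + 1) % l)} : Finset α) := by
      simp only [mem_insert, mem_singleton, not_or]
      exact ⟨hwk, hwk1⟩
    have hwg : w ∉ (range l).image g := by
      intro hw
      exact hwZ (mem_sdiff.mpr ⟨mem_union_left _ hw, hwpr⟩)
    have hwprev : ∀ j < k, w ∉ ed j := by
      intro j hj hwj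
      exact hwZ (mem_sdiff.mpr ⟨mem_union_right _ (mem_biUnion.mpr ⟨j, mem_range.mpr hj, hwj⟩),
        hwpr⟩)
    refine ⟨Function.update ed k e, ?_⟩
    intro i hik1
    by_cases hik : i = k
    · subst hik
      refine ⟨by rw [Function.update_self]; exact heH, w,
        by rw [Function.update_self]; exact heq, hwg, ?_⟩
      intro j hj hji
      rw [Function.update_of_ne hji]
      exact hwprev j (by omega)
    · obtain ⟨hiH, wi, hieq, hwig, hwiold⟩ := hed i (by omega)
      refine ⟨by rw [Function.update_of_ne hik]; exact hiH, wi,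
        by rw [Function.update_of_ne hik]; exact hieq, hwig, ?_⟩
      intro j hj hji
      by_cases hjk : j = k
      · rw [hjk, Function.update_self, heq]
        simp only [mem_insert, mem_singleton, not_or]
        refine ⟨?_, ?_, ?_⟩
        · intro h; exact hwig (h ▸ hgmem k hkl)
        · intro h; exact hwig (h ▸ hgmem _ hk1l)
        · intro h
          apply hwprev i (by omega)
          rw [← h, hieq]; simp
      · rw [Function.update_of_ne hjk]
        exact hwiold j (by omega) hji

theorem expand_cycle {l : ℕ} (hl : 3 ≤ l) (h3 : ∀ e ∈ H, e.card = 3) {g : ℕ → α}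
    (hginj : ∀ i < l, ∀ j < l, i ≠ j → g i ≠ g j)
    (hgQ : ∀ i < l, 2 * l ≤ codP H {g i, g ((i + 1) % l)}) :
    ContainsUniformLooseCycle 3 l (↑H : Set (Finset α)) := by
  obtain ⟨ed, hed⟩ := expand_aux hl h3 hginj hgQ l le_rfl
  have hgmem : ∀ i < l, g i ∈ (range l).image g := fun i hi =>
    mem_image.mpr ⟨i, mem_range.mpr hi, rfl⟩
  -- basic membership facts
  have hmem : ∀ i < l, g i ∈ ed i ∧ g ((i + 1) % l) ∈ ed i := by
    intro i hi
    obtain ⟨-, wi, hieq, -, -⟩ := hed i hi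
    rw [hieq]; simp
  -- `g a ∈ ed j` only when `a = j` or `a = (j+1)%l`
  have hgni : ∀ a < l, ∀ j < l, a ≠ j → a ≠ (j + 1) % l → g a ∉ ed j := by
    intro a ha j hj haj haj1
    obtain ⟨-, wj, hjeq, hwjg, -⟩ := hed j hj
    rw [hjeq]
    simp only [mem_insert, mem_singleton, not_or]
    refine ⟨hginj a ha j hj haj, hginj a ha _ (succ_mod_lt j (by omega)) haj1, ?_⟩
    intro h
    exact hwjg (h ▸ hgmem a ha)
  refine ⟨ed, ⟨?_, ?_, ?_, ?_⟩, ?_, ?_⟩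
  · -- distinct edges
    intro i hi j hj hij
    obtain ⟨-, wi, hieq, -, hwiav⟩ := hed i hi
    intro h
    apply hwiav j hj (fun hji => hij hji.symm)
    rw [← h, hieq]; simp
  · -- card ≥ 2
    intro i hi
    obtain ⟨hiH, -⟩ := hed i hi
    rw [h3 _ hiH]; omega
  · -- consecutive intersections
    intro i hi
    have hi1 : (i + 1) % l < l := succ_mod_lt i (by omega)
    have hcap : ed i ∩ ed ((i + 1) % l) = {g ((i + 1) % l)} := by
      obtain ⟨-, wi, hieq, hwig, hwiav⟩ := hed i hi
      apply Finset.ext; intro x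
      rw [mem_inter, mem_singleton]
      constructor
      · rintro ⟨hx1, hx2⟩
        rw [hieq] at hx1
        simp only [mem_insert, mem_singleton] at hx1
        rcases hx1 with rfl | rfl | rfl
        · exfalso
          apply hgni i hi _ hi1 (Ne.symm (succ_mod_ne (by omega) hi))
            (Ne.symm (succ_succ_mod_ne hl hi)) hx2
        · rfl
        · exfalso
          exact hwiav _ hi1 (succ_mod_ne (by omega) hi) hx2
      · rintro rfl
        exact ⟨(hmem i hi).2, (hmem _ hi1).1⟩
    rw [hcap, card_singleton]
  · -- non-adjacent disjoint
    intro i hi j hj hji hji1 hij1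
    have hi1 : (i + 1) % l < l := succ_mod_lt i (by omega)
    obtain ⟨-, wi, hieq, hwig, hwiav⟩ := hed i hi
    apply eq_empty_of_forall_notMem
    intro x hx
    rw [mem_inter] at hx
    obtain ⟨hx1, hx2⟩ := hx
    rw [hieq] at hx1
    simp only [mem_insert, mem_singleton] at hx1
    rcases hx1 with rfl | rfl | rfl
    · exact hgni i hi j hj (fun h => hji h.symm) hij1 hx2
    · apply hgni _ hi1 j hj (fun h => hji1 h.symm) ?_ hx2
      intro h
      exact hji (succ_mod_inj hj hi h.symm)
    · exact hwiav j hj (fun h => hji h) hx2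
  · -- uniform
    intro i hi
    exact h3 _ (hed i hi).1
  · -- membership
    intro i hi
    exact Finset.mem_coe.mpr (hed i hi).1

theorem tri_bound {l : ℕ} (hl : 3 ≤ l) (h3 : ∀ e ∈ H, e.card = 3)
    (hfree : ¬ ContainsUniformLooseCycle 3 l (↑H : Set (Finset α))) :
    ∀ N (Q : Finset (Finset α)), Q.card = N → Q ⊆ FatPairs l H →
      (triOf Q).card ≤ (2 * l - 3) * Q.card := by
  intro N
  induction N using Nat.strong_induction_on with
  | _ N IH =>
    intro Q hQN hQF
    have hQ2 : ∀ q ∈ Q, q.card = 2 := by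
      intro q hq
      have := hQF hq
      rw [FatPairs, mem_filter, mem_powersetCard] at this
      exact this.1.2
    by_cases hex : ∃ q ∈ Q, ((triOf Q).filter (q ⊆ ·)).card ≤ 2 * l - 3
    · obtain ⟨q, hqQ, hqcnt⟩ := hex
      have hQN1 : 1 ≤ N := by
        rw [← hQN]
        exact card_pos.mpr ⟨q, hqQ⟩
      have herase : (Q.erase q).card = N - 1 := by rw [card_erase_of_mem hqQ, hQN]
      have hIH := IH (N - 1) (by omega) (Q.erase q) herase
        (Subset.trans (erase_subset q Q) hQF)
      rw [herase] at hIH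
      have hsub : triOf Q ⊆ triOf (Q.erase q) ∪ (triOf Q).filter (q ⊆ ·) := by
        intro t ht
        by_cases hqt : q ⊆ t
        · exact mem_union_right _ (mem_filter.mpr ⟨ht, hqt⟩)
        · apply mem_union_left
          rw [triOf, mem_filter] at ht ⊢
          refine ⟨ht.1, ?_⟩
          intro p hp
          apply mem_erase.mpr
          refine ⟨?_, ht.2 p hp⟩
          intro hpq
          subst hpq
          rw [mem_powersetCard] at hp
          exact hqt hp.1
      calc (triOf Q).card ≤ (triOf (Q.erase q) ∪ (triOf Q).filter (q ⊆ ·)).card :=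
          card_le_card hsub
        _ ≤ (triOf (Q.erase q)).card + ((triOf Q).filter (q ⊆ ·)).card := card_union_le _ _
        _ ≤ (2 * l - 3) * (N - 1) + (2 * l - 3) := Nat.add_le_add hIH hqcnt
        _ ≤ (2 * l - 3) * Q.card := by
            rw [hQN]
            have hN : N - 1 + 1 = N := by omega
            have heqn : (2 * l - 3) * (N - 1) + (2 * l - 3) = (2 * l - 3) * N := by
              calc (2 * l - 3) * (N - 1) + (2 * l - 3)
                  = (2 * l - 3) * ((N - 1) + 1) := by ring
                _ = (2 * l - 3) * N := by rw [hN]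
            exact le_of_eq heqn
    · push_neg at hex
      rcases Q.eq_empty_or_nonempty with rfl | hQne
      · rw [card_empty, Nat.mul_zero, Nat.le_zero, card_eq_zero]
        apply eq_empty_of_forall_notMem
        intro t ht
        rw [triOf, mem_filter, mem_powersetCard] at ht
        obtain ⟨⟨-, ht3⟩, htp⟩ := ht
        have hne' : (t.powersetCard 2).Nonempty := by
          rw [← card_pos, card_powersetCard, ht3]
          decide
        obtain ⟨p, hp⟩ := hne'
        exact notMem_empty p (htp p hp)
      · exfalso
        apply hfree
        obtain ⟨g, hginj, hgQ⟩ := cycles_of_rich hl hQ2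
          (fun q hq => by have := hex q hq; omega) hQne l hl (by omega)
        apply expand_cycle hl h3 hginj
        intro i hi
        have := hgQ i hi
        have hF := hQF this
        rw [FatPairs, mem_filter] at hF
        exact hF.2


theorem mem_FatS {l : ℕ} {v x : α} :
    x ∈ FatS l H v ↔ x ≠ v ∧ 2 * l ≤ codP H {v, x} := by
  rw [FatS, mem_filter]
  simp

/-- edges all of whose pairs are fat -/
def AllFatE (l : ℕ) (H : Finset (Finset α)) : Finset (Finset α) :=
  H.filter (fun e => ∀ p ∈ e.powersetCard 2, 2 * l ≤ codP H p)

theorem pair_subset_triple {p : Finset α} {a b c : α} (hp : p.card = 2)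
    (hsub : p ⊆ ({a, b, c} : Finset α)) :
    p = {a, b} ∨ p = {a, c} ∨ p = {b, c} := by
  obtain ⟨x, y, hxy, rfl⟩ := Finset.card_eq_two.mp hp
  have hx := hsub (mem_insert_self x {y})
  have hy := hsub (show y ∈ ({x, y} : Finset α) by simp)
  simp only [mem_insert, mem_singleton] at hx hy
  rcases hx with rfl | rfl | rfl <;> rcases hy with rfl | rfl | rfl
  · exact absurd rfl hxy
  · exact Or.inl rfl
  · exact Or.inr (Or.inl rfl)
  · exact Or.inl (Finset.pair_comm _ _)
  · exact absurd rfl hxy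
  · exact Or.inr (Or.inr rfl)
  · exact Or.inr (Or.inl (Finset.pair_comm _ _))
  · exact Or.inr (Or.inr (Finset.pair_comm _ _))
  · exact absurd rfl hxy

theorem allfat_bound {l : ℕ} (hl : 3 ≤ l) (h3 : ∀ e ∈ H, e.card = 3)
    (hfree : ¬ ContainsUniformLooseCycle 3 l (↑H : Set (Finset α))) :
    (AllFatE l H).card ≤ (2 * l - 3) * (FatPairs l H).card := by
  have hsub : AllFatE l H ⊆ triOf (FatPairs l H) := by
    intro e he
    rw [AllFatE, mem_filter] at he
    rw [triOf, mem_filter, mem_powersetCard]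
    refine ⟨⟨subset_univ _, h3 _ he.1⟩, ?_⟩
    intro p hp
    rw [FatPairs, mem_filter, mem_powersetCard]
    rw [mem_powersetCard] at hp
    exact ⟨⟨subset_univ _, hp.2⟩, he.2 p (mem_powersetCard.mpr hp)⟩
  calc (AllFatE l H).card ≤ (triOf (FatPairs l H)).card := card_le_card hsub
    _ ≤ (2 * l - 3) * (FatPairs l H).card :=
        tri_bound hl h3 hfree (FatPairs l H).card (FatPairs l H) rfl Subset.rfl

theorem fatpairs_card (l : ℕ) :
    (FatPairs l H).card ≤ ∑ v : α, (FatS l H v).card := by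
  have hOcard : ((univ ×ˢ univ).filter (fun vx : α × α => vx.2 ∈ FatS l H vx.1)).card =
      ∑ v : α, (FatS l H v).card := by
    rw [card_filter, Finset.sum_product]
    apply Finset.sum_congr rfl
    intro v _
    rw [← card_filter]
    congr 1
    apply Finset.ext; intro x
    simp [mem_FatS]
  rw [← hOcard]
  apply card_le_card_of_injOn (fun p => (sel p, sel (p.erase (sel p))))
  · intro p hp
    rw [mem_coe, FatPairs, mem_filter, mem_powersetCard] at hp
    obtain ⟨⟨-, hp2⟩, hpfat⟩ := hp
    have hne1 : p.Nonempty := by rw [← card_pos, hp2]; omega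
    have h1 : sel p ∈ p := sel_mem hne1
    have hc1 : (p.erase (sel p)).card = 1 := by rw [card_erase_of_mem h1, hp2]
    have hne2 : (p.erase (sel p)).Nonempty := by rw [← card_pos, hc1]; omega
    have h2 : sel (p.erase (sel p)) ∈ p.erase (sel p) := sel_mem hne2
    have h2' : sel (p.erase (sel p)) ∈ p := mem_of_mem_erase h2
    have h12 : sel (p.erase (sel p)) ≠ sel p := ne_of_mem_erase h2
    have hpeq : p = {sel p, sel (p.erase (sel p))} := by
      symm
      apply Finset.eq_of_subset_of_card_le
      · intro z hz
        simp only [mem_insert, mem_singleton] at hz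
        rcases hz with rfl | rfl
        · exact h1
        · exact h2'
      · rw [hp2, card_insert_of_notMem (by simp only [mem_singleton]; exact fun h => h12 h.symm), card_singleton]
    rw [mem_coe, mem_filter, mem_product]
    refine ⟨⟨mem_univ _, mem_univ _⟩, ?_⟩
    rw [mem_FatS]
    refine ⟨h12, ?_⟩
    rw [← hpeq]
    exact hpfat
  · intro p hp q hq heq
    rw [Finset.mem_coe, FatPairs, mem_filter, mem_powersetCard] at hp hq
    have hp2 := hp.1.2
    have hq2 := hq.1.2
    -- reconstruct p and q from their selected elements
    have hrec : ∀ r : Finset α, r.card = 2 → r = {sel r, sel (r.erase (sel r))} := by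
      intro r hr2
      have hne1 : r.Nonempty := by rw [← card_pos, hr2]; omega
      have h1 : sel r ∈ r := sel_mem hne1
      have hc1 : (r.erase (sel r)).card = 1 := by rw [card_erase_of_mem h1, hr2]
      have hne2 : (r.erase (sel r)).Nonempty := by rw [← card_pos, hc1]; omega
      have h2' : sel (r.erase (sel r)) ∈ r := mem_of_mem_erase (sel_mem hne2)
      have h12 : sel (r.erase (sel r)) ≠ sel r := ne_of_mem_erase (sel_mem hne2)
      symm
      apply Finset.eq_of_subset_of_card_le
      · intro z hz
        simp only [mem_insert, mem_singleton] at hz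
        rcases hz with rfl | rfl
        · exact h1
        · exact h2'
      · rw [hr2, card_insert_of_notMem (by simp only [mem_singleton]; exact fun h => h12 h.symm), card_singleton]
    have h1 : (sel p, sel (p.erase (sel p))) = (sel q, sel (q.erase (sel q))) := heq
    rw [Prod.mk.injEq] at h1
    rw [hrec p hp2, hrec q hq2, h1.2, h1.1]


theorem third_diff {e : Finset α} {u t w : α} (he : e = {u, t, w}) (hwu : w ≠ u)
    (hwt : w ≠ t) : e \ ({u, t} : Finset α) = {w} := by
  rw [he]
  apply Finset.ext; intro x
  simp only [mem_sdiff, mem_insert, mem_singleton, not_or]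
  constructor
  · rintro ⟨h1 | h1 | h1, h2, h3⟩
    · exact absurd h1 h2
    · exact absurd h1 h3
    · exact h1
  · rintro rfl
    exact ⟨Or.inr (Or.inr rfl), hwu, hwt⟩

set_option maxHeartbeats 2000000 in
theorem count_T {l : ℕ} (hl : 3 ≤ l) (h3 : ∀ e ∈ H, e.card = 3) :
    (∑ v : α, ∑ x ∈ FatS l H v, codP H {v, x}) ≤
      4 * ((2 * l - 1) * ∑ c : α, (UsetS l H c).card) + 9 * (AllFatE l H).card := by
  classical
  set Pe : Finset α → Finset (α × α) := fun e =>
    (univ ×ˢ univ).filter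
      (fun vx : α × α => vx.2 ∈ FatS l H vx.1 ∧ vx.1 ∈ e ∧ vx.2 ∈ e) with hPe
  set Ap : Finset α → α × α → Prop := fun e vx =>
    ∃ c ∈ e, c ≠ vx.1 ∧ c ≠ vx.2 ∧
      (codP H {vx.1, c} ≤ 2 * l - 1 ∨ codP H {vx.2, c} ≤ 2 * l - 1) with hAp
  have hApdef : ∀ (e : Finset α) (vx : α × α), Ap e vx ↔
      ∃ c ∈ e, c ≠ vx.1 ∧ c ≠ vx.2 ∧
        (codP H {vx.1, c} ≤ 2 * l - 1 ∨ codP H {vx.2, c} ≤ 2 * l - 1) :=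
    fun e vx => Iff.rfl
  set Te : Finset α → Finset (α × α) := fun e =>
    (univ ×ˢ univ).filter
      (fun yc : α × α => yc.1 ∈ e ∧ yc.2 ∈ e ∧ yc.1 ≠ yc.2 ∧
        codP H {yc.1, yc.2} ≤ 2 * l - 1 ∧ yc.1 ∈ UsetS l H yc.2) with hTe
  -- Step 1 : rewrite the sum as a sum over edges
  have step1 : (∑ v : α, ∑ x ∈ FatS l H v, codP H {v, x}) =
      ∑ e ∈ H, (Pe e).card := by
    have cardPe : ∀ e : Finset α, (Pe e).card =
        ∑ v : α, ∑ x : α, if x ∈ FatS l H v ∧ v ∈ e ∧ x ∈ e then 1 else 0 := by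
      intro e
      rw [hPe]
      rw [card_filter, Finset.sum_product]
    calc (∑ v : α, ∑ x ∈ FatS l H v, codP H {v, x})
        = ∑ v : α, ∑ x : α, if x ∈ FatS l H v then codP H {v, x} else 0 := by
          apply Finset.sum_congr rfl; intro v _
          rw [Finset.sum_ite_mem, univ_inter]
      _ = ∑ v : α, ∑ x : α, ∑ e ∈ H, (if x ∈ FatS l H v ∧ v ∈ e ∧ x ∈ e then 1 else 0) := by
          apply Finset.sum_congr rfl; intro v _
          apply Finset.sum_congr rfl; intro x _
          by_cases hx : x ∈ FatS l H v
          · rw [if_pos hx, codP_eq_filter_mem, card_filter]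
            apply Finset.sum_congr rfl; intro e _
            by_cases hm : v ∈ e ∧ x ∈ e
            · rw [if_pos hm, if_pos ⟨hx, hm⟩]
            · rw [if_neg hm, if_neg (by tauto)]
          · rw [if_neg hx]
            symm
            apply Finset.sum_eq_zero
            intro e _
            rw [if_neg (by tauto)]
      _ = ∑ v : α, ∑ e ∈ H, ∑ x : α, (if x ∈ FatS l H v ∧ v ∈ e ∧ x ∈ e then 1 else 0) := by
          apply Finset.sum_congr rfl; intro v _
          rw [Finset.sum_comm]
      _ = ∑ e ∈ H, ∑ v : α, ∑ x : α, (if x ∈ FatS l H v ∧ v ∈ e ∧ x ∈ e then 1 else 0) := by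
          rw [Finset.sum_comm]
      _ = ∑ e ∈ H, (Pe e).card := by
          apply Finset.sum_congr rfl; intro e _
          rw [cardPe]
  -- Step 2 : split each `Pe e` by the predicate `Ap`
  have step2 : ∀ e : Finset α, (Pe e).card =
      ((Pe e).filter (Ap e)).card + ((Pe e).filter (fun vx => ¬ Ap e vx)).card := by
    intro e
    rw [Finset.card_filter_add_card_filter_not]
  -- bound on the `¬ Ap` part
  have hB : ∀ e ∈ H, ((Pe e).filter (fun vx => ¬ Ap e vx)).card ≤
      if e ∈ AllFatE l H then 9 else 0 := by
    intro e heH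
    by_cases hfat : e ∈ AllFatE l H
    · rw [if_pos hfat]
      calc ((Pe e).filter (fun vx => ¬ Ap e vx)).card
          ≤ (e ×ˢ e).card := by
            apply card_le_card
            intro vx hvx
            rw [mem_filter, hPe, mem_filter] at hvx
            rw [mem_product]
            obtain ⟨⟨-, -, h1, h2⟩, -⟩ := hvx
            exact ⟨h1, h2⟩
        _ = 9 := by rw [card_product, h3 _ heH]
    · rw [if_neg hfat]
      rw [Nat.le_zero, card_eq_zero]
      apply eq_empty_of_forall_notMem
      intro vx hvx
      rw [mem_filter, hPe, mem_filter] at hvx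
      obtain ⟨⟨-, hxF, hve, hxe⟩, hnA⟩ := hvx
      rw [hApdef] at hnA
      push_neg at hnA
      rw [mem_FatS] at hxF
      apply hfat
      rw [AllFatE, mem_filter]
      refine ⟨heH, ?_⟩
      intro p hp
      rw [mem_powersetCard] at hp
      obtain ⟨w, hwv, hwx, heq⟩ := exists_third h3 heH hve hxe (fun h => hxF.1 h.symm)
      have hw : w ∈ e := by rw [heq]; simp
      have hcross := hnA w hw hwv hwx
      rcases pair_subset_triple hp.2 (heq ▸ hp.1) with rfl | rfl | rfl
      · exact hxF.2
      · omega
      · omega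
  -- bound on the `Ap` part
  have hA : ∀ e ∈ H, ((Pe e).filter (Ap e)).card ≤ 4 * (Te e).card := by
    intro e heH
    set ψ : α × α → α × α := fun vx =>
      if codP H {vx.1, sel (e \ ({vx.1, vx.2} : Finset α))} ≤ 2 * l - 1
        then (vx.1, sel (e \ ({vx.1, vx.2} : Finset α)))
        else (vx.2, sel (e \ ({vx.1, vx.2} : Finset α))) with hψ
    have hψv : ∀ vx : α × α, ψ vx =
        if codP H {vx.1, sel (e \ ({vx.1, vx.2} : Finset α))} ≤ 2 * l - 1
          then (vx.1, sel (e \ ({vx.1, vx.2} : Finset α)))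
          else (vx.2, sel (e \ ({vx.1, vx.2} : Finset α))) := fun _ => rfl
    have hmaps : ∀ vx ∈ (Pe e).filter (Ap e), ψ vx ∈ Te e := by
      intro vx hvx
      rw [mem_filter, hPe, mem_filter] at hvx
      obtain ⟨⟨-, hxF, hve, hxe⟩, hApx⟩ := hvx
      rw [mem_FatS] at hxF
      obtain ⟨w, hwv, hwx, heq⟩ := exists_third h3 heH hve hxe (fun h => hxF.1 h.symm)
      have hdiff : e \ ({vx.1, vx.2} : Finset α) = {w} := third_diff heq hwv hwx
      have hselw : sel (e \ ({vx.1, vx.2} : Finset α)) = w := by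
        rw [hdiff, sel_singleton]
      have hwe : w ∈ e := by rw [heq]; simp
      have hthin : codP H {vx.1, w} ≤ 2 * l - 1 ∨
          (¬ codP H {vx.1, w} ≤ 2 * l - 1 ∧ codP H {vx.2, w} ≤ 2 * l - 1) := by
        rw [hApdef] at hApx
        obtain ⟨c, hce, hcv, hcx, hc⟩ := hApx
        have hcw : c = w := by
          rw [heq] at hce
          simp only [mem_insert, mem_singleton] at hce
          rcases hce with rfl | rfl | rfl
          · exact absurd rfl hcv
          · exact absurd rfl hcx
          · rfl
        subst hcw
        by_cases h1 : codP H {vx.1, c} ≤ 2 * l - 1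
        · exact Or.inl h1
        · right
          refine ⟨h1, ?_⟩
          tauto
      have husetv : vx.1 ∈ UsetS l H w := by
        rw [UsetS, mem_filter]
        refine ⟨mem_univ _, fun h => hwv h.symm, vx.2, hxF.1, fun h => hwx h.symm, ?_, hxF.2⟩
        have : ({vx.1, vx.2, w} : Finset α) = e := heq.symm
        rw [this]; exact heH
      have husetx : vx.2 ∈ UsetS l H w := by
        rw [UsetS, mem_filter]
        refine ⟨mem_univ _, fun h => hwx h.symm, vx.1, hxF.1.symm, fun h => hwv h.symm, ?_, ?_⟩
        · have : ({vx.2, vx.1, w} : Finset α) = e := by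
            rw [heq]
            apply Finset.ext; intro z
            simp only [mem_insert, mem_singleton]
            tauto
          rw [this]; exact heH
        · rw [codP_comm]; exact hxF.2
      rw [hTe, mem_filter, hψv vx]
      by_cases hcase : codP H {vx.1, sel (e \ ({vx.1, vx.2} : Finset α))} ≤ 2 * l - 1
      · rw [if_pos hcase]
        rw [hselw] at hcase ⊢
        exact ⟨mem_product.mpr ⟨mem_univ _, mem_univ _⟩, hve, hwe, fun h => hwv h.symm, hcase, husetv⟩
      · rw [if_neg hcase]
        rw [hselw] at hcase ⊢
        rcases hthin with h1 | ⟨h1, h2⟩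
        · exact absurd h1 hcase
        · exact ⟨mem_product.mpr ⟨mem_univ _, mem_univ _⟩, hxe, hwe, fun h => hwx h.symm, h2, husetx⟩
    have hfib : ∀ yc ∈ Te e, (((Pe e).filter (Ap e)).filter (fun vx => ψ vx = yc)).card ≤ 4 := by
      intro yc hyc
      rw [hTe, mem_filter] at hyc
      obtain ⟨-, -, hce, -⟩ := hyc
      have hsub : ((Pe e).filter (Ap e)).filter (fun vx => ψ vx = yc) ⊆
          (e.erase yc.2) ×ˢ (e.erase yc.2) := by
        intro vx hvx
        rw [mem_filter] at hvx
        obtain ⟨hvx1, hψeq⟩ := hvx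
        rw [mem_filter, hPe, mem_filter] at hvx1
        obtain ⟨⟨-, hxF, hve, hxe⟩, -⟩ := hvx1
        rw [mem_FatS] at hxF
        obtain ⟨w, hwv, hwx, heq⟩ := exists_third h3 heH hve hxe (fun h => hxF.1 h.symm)
        have hselw : sel (e \ ({vx.1, vx.2} : Finset α)) = w := by
          rw [third_diff heq hwv hwx, sel_singleton]
        have hsnd : yc.2 = w := by
          rw [hψv vx] at hψeq
          by_cases hc : codP H {vx.1, sel (e \ ({vx.1, vx.2} : Finset α))} ≤ 2 * l - 1
          · rw [if_pos hc] at hψeq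
            rw [← hψeq, hselw]
          · rw [if_neg hc] at hψeq
            rw [← hψeq, hselw]
        rw [mem_product, mem_erase, mem_erase, hsnd]
        exact ⟨⟨fun h => hwv h.symm, hve⟩, ⟨fun h => hwx h.symm, hxe⟩⟩
      calc (((Pe e).filter (Ap e)).filter (fun vx => ψ vx = yc)).card
          ≤ ((e.erase yc.2) ×ˢ (e.erase yc.2)).card := card_le_card hsub
        _ = (e.erase yc.2).card * (e.erase yc.2).card := card_product _ _
        _ ≤ 4 := by
            have h1 : (e.erase yc.2).card = 2 := by
              rw [card_erase_of_mem hce, h3 _ heH]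
            rw [h1]
    calc ((Pe e).filter (Ap e)).card
        = ∑ yc ∈ Te e, (((Pe e).filter (Ap e)).filter (fun vx => ψ vx = yc)).card :=
          Finset.card_eq_sum_card_fiberwise hmaps
      _ ≤ ∑ _yc ∈ Te e, 4 := Finset.sum_le_sum hfib
      _ = 4 * (Te e).card := by rw [Finset.sum_const, smul_eq_mul, mul_comm]
  -- bound the total of `Te`
  have hTtot : ∑ e ∈ H, (Te e).card ≤ (2 * l - 1) * ∑ c : α, (UsetS l H c).card := by
    have cardTe : ∀ e : Finset α, (Te e).card =
        ∑ y : α, ∑ c : α, if (y ∈ e ∧ c ∈ e ∧ y ≠ c ∧ codP H {y, c} ≤ 2 * l - 1 ∧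
          y ∈ UsetS l H c) then 1 else 0 := by
      intro e
      rw [hTe, card_filter, Finset.sum_product]
    calc ∑ e ∈ H, (Te e).card
        = ∑ e ∈ H, ∑ y : α, ∑ c : α, (if (y ∈ e ∧ c ∈ e ∧ y ≠ c ∧
            codP H {y, c} ≤ 2 * l - 1 ∧ y ∈ UsetS l H c) then 1 else 0) := by
          apply Finset.sum_congr rfl; intro e _; rw [cardTe]
      _ = ∑ y : α, ∑ e ∈ H, ∑ c : α, (if (y ∈ e ∧ c ∈ e ∧ y ≠ c ∧
            codP H {y, c} ≤ 2 * l - 1 ∧ y ∈ UsetS l H c) then 1 else 0) := by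
          rw [Finset.sum_comm]
      _ = ∑ y : α, ∑ c : α, ∑ e ∈ H, (if (y ∈ e ∧ c ∈ e ∧ y ≠ c ∧
            codP H {y, c} ≤ 2 * l - 1 ∧ y ∈ UsetS l H c) then 1 else 0) := by
          apply Finset.sum_congr rfl; intro y _
          rw [Finset.sum_comm]
      _ ≤ ∑ y : α, ∑ c : α, (if (y ≠ c ∧ y ∈ UsetS l H c) then 2 * l - 1 else 0) := by
          apply Finset.sum_le_sum; intro y _
          apply Finset.sum_le_sum; intro c _
          by_cases hR : y ≠ c ∧ codP H {y, c} ≤ 2 * l - 1 ∧ y ∈ UsetS l H c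
          · rw [if_pos ⟨hR.1, hR.2.2⟩]
            calc ∑ e ∈ H, (if (y ∈ e ∧ c ∈ e ∧ y ≠ c ∧ codP H {y, c} ≤ 2 * l - 1 ∧
                  y ∈ UsetS l H c) then 1 else 0)
                ≤ ∑ e ∈ H, (if (y ∈ e ∧ c ∈ e) then 1 else 0) := by
                  apply Finset.sum_le_sum; intro e _
                  by_cases hm : y ∈ e ∧ c ∈ e
                  · by_cases hall : y ∈ e ∧ c ∈ e ∧ y ≠ c ∧ codP H {y, c} ≤ 2 * l - 1 ∧
                      y ∈ UsetS l H c
                    · rw [if_pos hall, if_pos hm]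
                    · rw [if_neg hall, if_pos hm]; omega
                  · rw [if_neg (by tauto), if_neg hm]
              _ = codP H {y, c} := by rw [codP_eq_filter_mem, card_filter]
              _ ≤ 2 * l - 1 := hR.2.1
          · have h0 : ∀ e ∈ H, (if (y ∈ e ∧ c ∈ e ∧ y ≠ c ∧ codP H {y, c} ≤ 2 * l - 1 ∧
                y ∈ UsetS l H c) then 1 else 0) = 0 := by
              intro e _
              rw [if_neg (by tauto)]
            rw [Finset.sum_congr rfl h0, Finset.sum_const, smul_eq_mul, mul_zero]
            omega
      _ ≤ ∑ c : α, ∑ y : α, (if y ∈ UsetS l H c then 2 * l - 1 else 0) := by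
          rw [Finset.sum_comm]
          apply Finset.sum_le_sum; intro c _
          apply Finset.sum_le_sum; intro y _
          by_cases h1 : y ≠ c ∧ y ∈ UsetS l H c
          · rw [if_pos h1, if_pos h1.2]
          · rw [if_neg h1]; omega
      _ = (2 * l - 1) * ∑ c : α, (UsetS l H c).card := by
          rw [Finset.mul_sum]
          apply Finset.sum_congr rfl; intro c _
          rw [Finset.sum_ite_mem, univ_inter, Finset.sum_const, smul_eq_mul, Nat.mul_comm]
  -- assemble
  calc (∑ v : α, ∑ x ∈ FatS l H v, codP H {v, x})
      = ∑ e ∈ H, (Pe e).card := step1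
    _ = ∑ e ∈ H, (((Pe e).filter (Ap e)).card +
        ((Pe e).filter (fun vx => ¬ Ap e vx)).card) := by
        apply Finset.sum_congr rfl; intro e _; rw [← step2]
    _ = (∑ e ∈ H, ((Pe e).filter (Ap e)).card) +
        ∑ e ∈ H, ((Pe e).filter (fun vx => ¬ Ap e vx)).card := Finset.sum_add_distrib
    _ ≤ (∑ e ∈ H, 4 * (Te e).card) + ∑ e ∈ H, (if e ∈ AllFatE l H then 9 else 0) := by
        apply Nat.add_le_add
        · exact Finset.sum_le_sum hA
        · exact Finset.sum_le_sum hB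
    _ ≤ 4 * ((2 * l - 1) * ∑ c : α, (UsetS l H c).card) + 9 * (AllFatE l H).card := by
        apply Nat.add_le_add
        · rw [← Finset.mul_sum]
          exact Nat.mul_le_mul_left 4 hTtot
        · rw [Finset.sum_ite_mem]
          have hint : H ∩ AllFatE l H = AllFatE l H := by
            apply inter_eq_right.mpr
            intro e he
            rw [AllFatE, mem_filter] at he
            exact he.1
          rw [hint, Finset.sum_const, smul_eq_mul, mul_comm]


theorem deg_sum (h3 : ∀ e ∈ H, e.card = 3) : ∑ v : α, degS H v = 3 * H.card := by
  calc ∑ v : α, degS H v = ∑ v : α, ∑ e ∈ H, if v ∈ e then 1 else 0 := by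
        apply Finset.sum_congr rfl; intro v _
        rw [degS, card_filter]
    _ = ∑ e ∈ H, ∑ v : α, if v ∈ e then 1 else 0 := Finset.sum_comm
    _ = ∑ e ∈ H, e.card := by
        apply Finset.sum_congr rfl; intro e _
        rw [Finset.sum_ite_mem, univ_inter, Finset.sum_const, smul_eq_mul, mul_one]
    _ = ∑ _e ∈ H, 3 := Finset.sum_congr rfl h3
    _ = 3 * H.card := by rw [Finset.sum_const, smul_eq_mul, Nat.mul_comm]

end WithSel

end

end LCE



set_option maxHeartbeats 2000000 in
/-- Every `C_l^3`-free 3-graph of average degree `d` contains an extender `(X, Y)`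
with `|X| ≥ d / (24 l²)`. -/
theorem extender_existence {α : Type*} [DecidableEq α] [Fintype α] (l : ℕ)
    (hl : 3 ≤ l) (H : Finset (Finset α)) (h3 : ∀ e ∈ H, e.card = 3)
    (hfree : ¬ ContainsUniformLooseCycle 3 l (↑H : Set (Finset α))) :
    ∃ X Y : Finset α, IsExtender l H X Y ∧
      ((3 * H.card : ℝ) / (Fintype.card α : ℝ)) / (24 * (l : ℝ) ^ 2) ≤ (X.card : ℝ) := by
  classical
  open LCE in
  set b : ℝ := ((3 * H.card : ℝ) / (Fintype.card α : ℝ)) / (24 * (l : ℝ) ^ 2) with hbdef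
  by_cases hb1 : b ≤ 1
  · by_cases hα : Nonempty α
    · obtain ⟨v⟩ := hα
      refine ⟨{v}, ∅, ⟨by simp, by simp, ?_⟩, ?_⟩
      · intro u hu u' hu' huu' S hS1 hS2
        rw [mem_singleton] at hu hu'
        exact absurd (hu.trans hu'.symm) huu'
      · rw [card_singleton]
        exact_mod_cast hb1
    · refine ⟨∅, ∅, ⟨by simp, by simp, ?_⟩, ?_⟩
      · intro u hu; exact absurd hu (notMem_empty u)
      · have hn0 : (Fintype.card α : ℝ) = 0 := by
          rw [Fintype.card_eq_zero_iff.mpr (by simpa using hα)]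
          norm_num
        rw [card_empty]
        rw [hbdef, hn0, div_zero, zero_div]
        norm_num
  · push_neg at hb1
    have hbpos : (0 : ℝ) < b := lt_trans one_pos hb1
    have hl0 : (0 : ℝ) < (l : ℝ) := by exact_mod_cast Nat.lt_of_lt_of_le (by norm_num) hl
    have hnpos : (0 : ℝ) < (Fintype.card α : ℝ) := by
      by_contra hn
      push_neg at hn
      have : (Fintype.card α : ℝ) = 0 := le_antisymm hn (by positivity)
      rw [hbdef, this, div_zero, zero_div] at hb1
      linarith
    have hα : Nonempty α := by
      rw [← Fintype.card_pos_iff]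
      exact_mod_cast hnpos
    letI : Inhabited α := Classical.inhabited_of_nonempty hα
    letI : LinearOrder α :=
      LinearOrder.lift' (Fintype.equivFin α) (Fintype.equivFin α).injective
    by_contra hcon
    push_neg at hcon
    have hno : ∀ X Y : Finset α, IsExtender l H X Y → ((X.card : ℕ) : ℝ) < b := by
      intro X Y hext
      exact hcon X Y hext
    -- per-vertex bounds
    have hfat : ∀ v : α, (((FatS l H v).card : ℕ) : ℝ) < b := by
      intro v
      rcases (FatS l H v).eq_empty_or_nonempty with he | hne
      · rw [he, card_empty]
        exact_mod_cast hbpos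
      · exact hno _ _ (extender_fat hl h3 v hne)
    have huset : ∀ c : α, (((UsetS l H c).card : ℕ) : ℝ) < 3 * b + 1 :=
      uset_bound hl h3 hb1 hno
    have hdeg : ∀ v : α, ((degS H v : ℕ) : ℝ) ≤
        (∑ x ∈ FatS l H v, (codP H {v, x} : ℝ)) + (2 * l) * (2 * b) :=
      deg_bound hl h3 hb1 hno
    -- abbreviations
    set N : ℝ := (Fintype.card α : ℝ) with hN
    set L : ℝ := (l : ℝ) with hL
    -- total degree
    have hS1 : ((3 * H.card : ℕ) : ℝ) = ∑ v : α, ((degS H v : ℕ) : ℝ) := by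
      rw [← deg_sum h3]
      push_cast
      rfl
    have hS1b : ((3 * H.card : ℕ) : ℝ) ≤
        (∑ v : α, ∑ x ∈ FatS l H v, (codP H {v, x} : ℝ)) + N * ((2 * L) * (2 * b)) := by
      rw [hS1]
      calc ∑ v : α, ((degS H v : ℕ) : ℝ)
          ≤ ∑ v : α, ((∑ x ∈ FatS l H v, (codP H {v, x} : ℝ)) + (2 * l) * (2 * b)) :=
            Finset.sum_le_sum (fun v _ => hdeg v)
        _ = (∑ v : α, ∑ x ∈ FatS l H v, (codP H {v, x} : ℝ)) +
            N * ((2 * L) * (2 * b)) := by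
            rw [Finset.sum_add_distrib, Finset.sum_const, card_univ, nsmul_eq_mul]
    -- count_T cast
    have hcount := count_T (H := H) hl h3
    have hUsum : (∑ c : α, (((UsetS l H c).card : ℕ) : ℝ)) ≤ N * (3 * b + 1) := by
      calc (∑ c : α, (((UsetS l H c).card : ℕ) : ℝ))
          ≤ ∑ _c : α, (3 * b + 1) := Finset.sum_le_sum (fun c _ => le_of_lt (huset c))
        _ = N * (3 * b + 1) := by
            rw [Finset.sum_const, card_univ, nsmul_eq_mul, hN]
    have hFsum : (∑ v : α, (((FatS l H v).card : ℕ) : ℝ)) ≤ N * b := by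
      calc (∑ v : α, (((FatS l H v).card : ℕ) : ℝ))
          ≤ ∑ _v : α, b := Finset.sum_le_sum (fun v _ => le_of_lt (hfat v))
        _ = N * b := by rw [Finset.sum_const, card_univ, nsmul_eq_mul, hN]
    have hAF : (((AllFatE l H).card : ℕ) : ℝ) ≤ (2 * L) * (N * b) := by
      have h1 := allfat_bound hl h3 hfree
      have h2 := fatpairs_card (H := H) l
      have h3' : (AllFatE l H).card ≤ (2 * l - 3) * ∑ v : α, (FatS l H v).card :=
        le_trans h1 (Nat.mul_le_mul_left _ h2)
      have h4 : (((AllFatE l H).card : ℕ) : ℝ) ≤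
          ((2 * l - 3 : ℕ) : ℝ) * ∑ v : α, (((FatS l H v).card : ℕ) : ℝ) := by
        have := (Nat.cast_le (α := ℝ)).mpr h3'
        push_cast at this ⊢
        convert this using 2
      have h5 : ((2 * l - 3 : ℕ) : ℝ) ≤ 2 * L := by
        rw [hL]
        have : (2 * l - 3 : ℕ) ≤ 2 * l := by omega
        calc ((2 * l - 3 : ℕ) : ℝ) ≤ ((2 * l : ℕ) : ℝ) := by exact_mod_cast this
          _ = 2 * (l : ℝ) := by push_cast; ring
      have h6 : (0 : ℝ) ≤ ∑ v : α, (((FatS l H v).card : ℕ) : ℝ) :=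
        Finset.sum_nonneg (fun v _ => Nat.cast_nonneg _)
      calc (((AllFatE l H).card : ℕ) : ℝ)
          ≤ ((2 * l - 3 : ℕ) : ℝ) * ∑ v : α, (((FatS l H v).card : ℕ) : ℝ) := h4
        _ ≤ (2 * L) * ∑ v : α, (((FatS l H v).card : ℕ) : ℝ) := by
            apply mul_le_mul_of_nonneg_right h5 h6
        _ ≤ (2 * L) * (N * b) := by
            apply mul_le_mul_of_nonneg_left hFsum (by rw [hL]; positivity)
    have hS2 : (∑ v : α, ∑ x ∈ FatS l H v, (codP H {v, x} : ℝ)) ≤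
        4 * ((2 * L) * (N * (3 * b + 1))) + 9 * ((2 * L) * (N * b)) := by
      have hc : ((∑ v : α, ∑ x ∈ FatS l H v, codP H {v, x} : ℕ) : ℝ) ≤
          4 * (((2 * l - 1 : ℕ) : ℝ) * ∑ c : α, (((UsetS l H c).card : ℕ) : ℝ)) +
          9 * (((AllFatE l H).card : ℕ) : ℝ) := by
        have := (Nat.cast_le (α := ℝ)).mpr hcount
        push_cast at this ⊢
        convert this using 3
      have h5 : ((2 * l - 1 : ℕ) : ℝ) ≤ 2 * L := by
        rw [hL]
        have : (2 * l - 1 : ℕ) ≤ 2 * l := by omega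
        calc ((2 * l - 1 : ℕ) : ℝ) ≤ ((2 * l : ℕ) : ℝ) := by exact_mod_cast this
          _ = 2 * (l : ℝ) := by push_cast; ring
      have hcast : (∑ v : α, ∑ x ∈ FatS l H v, (codP H {v, x} : ℝ)) =
          ((∑ v : α, ∑ x ∈ FatS l H v, codP H {v, x} : ℕ) : ℝ) := by
        rw [Nat.cast_sum]
        apply Finset.sum_congr rfl
        intro v _
        rw [Nat.cast_sum]
      rw [hcast]
      have hUpos : (0 : ℝ) ≤ ∑ c : α, (((UsetS l H c).card : ℕ) : ℝ) :=
        Finset.sum_nonneg (fun c _ => Nat.cast_nonneg _)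
      calc ((∑ v : α, ∑ x ∈ FatS l H v, codP H {v, x} : ℕ) : ℝ)
          ≤ 4 * (((2 * l - 1 : ℕ) : ℝ) * ∑ c : α, (((UsetS l H c).card : ℕ) : ℝ)) +
            9 * (((AllFatE l H).card : ℕ) : ℝ) := hc
        _ ≤ 4 * ((2 * L) * (N * (3 * b + 1))) + 9 * ((2 * L) * (N * b)) := by
            apply add_le_add
            · apply mul_le_mul_of_nonneg_left _ (by norm_num)
              calc ((2 * l - 1 : ℕ) : ℝ) * ∑ c : α, (((UsetS l H c).card : ℕ) : ℝ)
                  ≤ (2 * L) * ∑ c : α, (((UsetS l H c).card : ℕ) : ℝ) :=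
                    mul_le_mul_of_nonneg_right h5 hUpos
                _ ≤ (2 * L) * (N * (3 * b + 1)) :=
                    mul_le_mul_of_nonneg_left hUsum (by rw [hL]; positivity)
            · exact mul_le_mul_of_nonneg_left hAF (by norm_num)
    -- final numeric contradiction
    have htot : ((3 * H.card : ℕ) : ℝ) ≤ 54 * L * N * b := by
      have := le_trans hS1b (add_le_add_left hS2 _)
      have hLpos : (0 : ℝ) < L := by rw [hL]; exact hl0
      nlinarith [hnpos, hbpos, hb1, this]
    have hHeq : ((3 * H.card : ℕ) : ℝ) = 24 * L ^ 2 * b * N := by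
      rw [hbdef]
      push_cast
      field_simp
    have hLge : (3 : ℝ) ≤ L := by rw [hL]; exact_mod_cast hl
    have h24 : 24 * L ^ 2 * b * N ≤ 54 * L * N * b := hHeq ▸ htot
    have hbn : (0 : ℝ) < b * N := mul_pos hbpos hnpos
    have hLL : 72 * L ≤ 24 * L ^ 2 := by nlinarith [hLge]
    nlinarith [h24, mul_le_mul_of_nonneg_right hLL hbn.le, hbn, hLge]
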